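/- arXiv:1707.07992 — 8 statements merged into one kernel-verified Lean document; each statement's English description precedes it below -/
import Mathlib

section
/- Let G ≤ Aut(C) and, for g ∈ G, let φ(g) be the linear extension to A_C(Λ) of t_i ↦ t_{i g⁻¹} and e^α ↦ e^{α g⁻¹}. Then φ : G → Aut(A_C(Λ)) is a well-defined group homomorphism into the algebra automorphism group of A_C(Λ) if and only if the structure parameters are G-regular. Moreover, when defined, φ is injective (the representation is faithful). -/
abbrev Word (n : ℕ) := Fin n → ZMod 2

def wsupp {n : ℕ} (α : Word n) : Finset (Fin n) :=
  Finset.univ.filter fun i => α i = 1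

def dotW {n : ℕ} (u v : Word n) : ZMod 2 := ∑ i, u i * v i

def IsStar {n : ℕ} (C : Submodule (ZMod 2) (Word n)) (α : Word n) : Prop :=
  α ∈ C ∧ α ≠ 0 ∧ α ≠ 1

structure CodeAlgebra (F : Type*) [Field F] {n : ℕ} (C : Submodule (ZMod 2) (Word n))
    (a : Fin n → Word n → F) (b : Word n → Word n → F) (c : Fin n → Word n → F)
    (A : Type*) [AddCommGroup A] [Module F A] where
  mul : A →ₗ[F] A →ₗ[F] A
  t : Fin n → A
  e : Word n → A
  bas : Module.Basis (Fin n ⊕ {α : Word n // IsStar C α}) F A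
  bas_t : ∀ i, bas (Sum.inl i) = t i
  bas_e : ∀ α, bas (Sum.inr α) = e α.1
  mul_comm : ∀ x y : A, mul x y = mul y x
  t_mul_t : ∀ i j, mul (t i) (t j) = if i = j then t i else 0
  t_mul_e : ∀ (i : Fin n) (α : Word n), IsStar C α →
    mul (t i) (e α) = if α i = 1 then a i α • e α else 0
  e_mul_e : ∀ (α β : Word n), IsStar C α → IsStar C β → α ≠ β → α + β ≠ 1 →
    mul (e α) (e β) = b α β • e (α + β)
  e_mul_self : ∀ (α : Word n), IsStar C α →
    mul (e α) (e α) = ∑ i ∈ wsupp α, c i α • t i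
  e_mul_compl : ∀ (α β : Word n), IsStar C α → IsStar C β → α + β = 1 →
    mul (e α) (e β) = 0

def Nondeg {F : Type*} [Field F] {n : ℕ} (C : Submodule (ZMod 2) (Word n))
    (a : Fin n → Word n → F) (b : Word n → Word n → F) (c : Fin n → Word n → F) : Prop :=
  (∀ i : Fin n, ∃ α ∈ C, α i = 1) ∧ (∃ α, IsStar C α) ∧
  (∀ i α, IsStar C α → α i = 1 → a i α ≠ 0) ∧
  (∀ α β, IsStar C α → IsStar C β → α ≠ β → α + β ≠ 1 → b α β ≠ 0) ∧
  (∀ i α, IsStar C α → α i = 1 → c i α ≠ 0)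

/-- The action of a permutation on a word: , i.e. . -/

def wperm {n : ℕ} (g : Equiv.Perm (Fin n)) (α : Word n) : Word n :=
  fun j => α (g.symm j)

section AuxLemmas

variable {n : ℕ}

lemma wperm_mul (g h : Equiv.Perm (Fin n)) (α : Word n) :
    wperm (g * h) α = wperm g (wperm h α) := rfl

lemma wperm_one_perm (α : Word n) : wperm 1 α = α := rfl

lemma wperm_zero (g : Equiv.Perm (Fin n)) : wperm g (0 : Word n) = 0 := rfl

lemma wperm_word_one (g : Equiv.Perm (Fin n)) : wperm g (1 : Word n) = 1 := rfl

lemma wperm_add (g : Equiv.Perm (Fin n)) (α β : Word n) :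
    wperm g (α + β) = wperm g α + wperm g β := rfl

lemma wperm_injective (g : Equiv.Perm (Fin n)) : Function.Injective (wperm g) := by
  intro α β h
  have h2 := congrArg (wperm g⁻¹) h
  rwa [← wperm_mul, ← wperm_mul, inv_mul_cancel, wperm_one_perm, wperm_one_perm] at h2

lemma wperm_apply_apply (g : Equiv.Perm (Fin n)) (α : Word n) (i : Fin n) :
    wperm g α (g i) = α i := by simp [wperm]

lemma wsupp_wperm (g : Equiv.Perm (Fin n)) (α : Word n) :
    wsupp (wperm g α) = (wsupp α).image g := by
  ext j
  simp only [wsupp, Finset.mem_filter, Finset.mem_univ, true_and, Finset.mem_image, wperm]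
  constructor
  · intro h; exact ⟨g.symm j, (Finset.mem_filter.mp h).2, by simp⟩
  · rintro ⟨i, h, rfl⟩; exact Finset.mem_filter.mpr ⟨Finset.mem_univ _, by simpa using h⟩

lemma IsStar.wperm_star {C : Submodule (ZMod 2) (Word n)} {α : Word n}
    {g : Equiv.Perm (Fin n)} (hα : IsStar C α) (hC : wperm g α ∈ C) :
    IsStar C (wperm g α) := by
  refine ⟨hC, fun h => hα.2.1 ?_, fun h => hα.2.2 ?_⟩
  · exact wperm_injective g (h.trans (wperm_zero g).symm)
  · exact wperm_injective g (h.trans (wperm_word_one g).symm)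

lemma zmod2_add_eq_zero : ∀ (x y : ZMod 2), x + y = 0 → x = y := by decide

lemma IsStar.add_star {C : Submodule (ZMod 2) (Word n)} {α β : Word n}
    (hα : IsStar C α) (hβ : IsStar C β) (hne : α ≠ β) (hone : α + β ≠ 1) :
    IsStar C (α + β) := by
  refine ⟨C.add_mem hα.1 hβ.1, fun h => hne ?_, hone⟩
  funext i
  exact zmod2_add_eq_zero _ _ (congrFun h i)

end AuxLemmas

/-- Lemma 3.6: the map φ sending g to the linear extension of t_i ↦ t_{gi}, e^α ↦ e^{gα}
is a well-defined group homomorphism into the algebra automorphisms of the code algebra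
if and only if the structure parameters are G-regular; moreover it is then faithful. -/
theorem code_aut_action_iff_regular {F : Type*} [Field F] {n : ℕ}
    {C : Submodule (ZMod 2) (Word n)}
    {a : Fin n → Word n → F} {b : Word n → Word n → F} {c : Fin n → Word n → F}
    {A : Type*} [AddCommGroup A] [Module F A]
    (CA : CodeAlgebra F C a b c A)
    (G : Subgroup (Equiv.Perm (Fin n)))
    (hG : ∀ g ∈ G, ∀ α ∈ C, wperm g α ∈ C)
    (φ : Equiv.Perm (Fin n) → (A →ₗ[F] A))
    (hφ : ∀ g, φ g = CA.bas.constr ℕ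
      (Sum.elim (fun i => CA.t (g i)) (fun α => CA.e (wperm g α.1)))) :
    -- φ is always compatible with the group structure on the basis
    (∀ g ∈ G, ∀ h ∈ G, φ (g * h) = (φ g).comp (φ h)) ∧
    -- φ(g) is an algebra map for all g ∈ G iff the parameters are G-regular
    ((∀ g ∈ G, ∀ x y : A, φ g (CA.mul x y) = CA.mul (φ g x) (φ g y)) ↔
      (∀ g ∈ G,
        (∀ i α, IsStar C α → α i = 1 → a i α = a (g i) (wperm g α)) ∧
        (∀ α β, IsStar C α → IsStar C β → α ≠ β → α + β ≠ 1 →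
          b α β = b (wperm g α) (wperm g β)) ∧
        (∀ i α, IsStar C α → α i = 1 → c i α = c (g i) (wperm g α)))) ∧
    -- faithfulness
    (∀ g ∈ G, ∀ h ∈ G, φ g = φ h → g = h) := by
  have phi_t : ∀ (g : Equiv.Perm (Fin n)) (i : Fin n), φ g (CA.t i) = CA.t (g i) := by
    intro g i
    rw [hφ, ← CA.bas_t i, Module.Basis.constr_basis]
    rfl
  have phi_e : ∀ (g : Equiv.Perm (Fin n)) (α : Word n), IsStar C α →
      φ g (CA.e α) = CA.e (wperm g α) := by
    intro g α hα
    rw [hφ, ← CA.bas_e ⟨α, hα⟩, Module.Basis.constr_basis]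
    rfl
  have e_ne : ∀ α, IsStar C α → CA.e α ≠ 0 := by
    intro α hα
    rw [← CA.bas_e ⟨α, hα⟩]
    exact CA.bas.ne_zero _
  have smul_cancel : ∀ (α : Word n), IsStar C α → ∀ r s : F,
      r • CA.e α = s • CA.e α → r = s := by
    intro α hα r s h
    have h2 : (r - s) • CA.e α = 0 := by rw [sub_smul, h, sub_self]
    rcases smul_eq_zero.mp h2 with h3 | h3
    · exact sub_eq_zero.mp h3
    · exact absurd h3 (e_ne α hα)
  have t_coeff : ∀ (s : Finset (Fin n)) (r r' : Fin n → F) (g : Equiv.Perm (Fin n)),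
      (∑ i ∈ s, r i • CA.t (g i)) = (∑ i ∈ s, r' i • CA.t (g i)) →
      ∀ i ∈ s, r i = r' i := by
    intro s r r' g h i hi
    have h2 := congrArg (fun x => CA.bas.repr x (Sum.inl (g i))) h
    simp only [← CA.bas_t, map_sum, map_smul, Module.Basis.repr_self, Finsupp.coe_finset_sum,
      Finset.sum_apply, Finsupp.coe_smul, Pi.smul_apply, Finsupp.single_apply,
      Sum.inl.injEq, EmbeddingLike.apply_eq_iff_eq, smul_eq_mul, mul_ite, mul_one,
      mul_zero, Finset.sum_ite_eq', hi, if_pos] at h2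
    exact h2
  refine ⟨?_, ?_, ?_⟩
  · intro g hg h hh
    apply CA.bas.ext
    intro k
    rcases k with i | ⟨α, hα⟩
    · rw [CA.bas_t, LinearMap.comp_apply, phi_t, phi_t, phi_t]
      rfl
    · rw [CA.bas_e, LinearMap.comp_apply, phi_e (g * h) α hα, phi_e h α hα,
        phi_e g _ (hα.wperm_star (hG h hh α hα.1)), wperm_mul]
  · constructor
    · intro hmul g hg
      refine ⟨?_, ?_, ?_⟩
      · intro i α hα hi
        have hαg := hα.wperm_star (hG g hg α hα.1)
        have h1 := hmul g hg (CA.t i) (CA.e α)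
        rw [CA.t_mul_e i α hα, if_pos hi, map_smul, phi_e g α hα, phi_t,
          CA.t_mul_e _ _ hαg, wperm_apply_apply, if_pos hi] at h1
        exact smul_cancel _ hαg _ _ h1
      · intro α β hα hβ hne hone
        have hαg := hα.wperm_star (hG g hg α hα.1)
        have hβg := hβ.wperm_star (hG g hg β hβ.1)
        have hsum := hα.add_star hβ hne hone
        have hsumg := hsum.wperm_star (hG g hg _ hsum.1)
        have hneg : wperm g α ≠ wperm g β := fun h => hne (wperm_injective g h)
        have honeg : wperm g α + wperm g β ≠ 1 := by
          rw [← wperm_add, ← wperm_word_one g]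
          exact fun h => hone (wperm_injective g h)
        have h1 := hmul g hg (CA.e α) (CA.e β)
        rw [CA.e_mul_e α β hα hβ hne hone, map_smul, phi_e g _ hsum, phi_e g α hα,
          phi_e g β hβ, CA.e_mul_e _ _ hαg hβg hneg honeg, ← wperm_add] at h1
        exact smul_cancel _ hsumg _ _ h1
      · intro i α hα hi
        have hαg := hα.wperm_star (hG g hg α hα.1)
        have h1 := hmul g hg (CA.e α) (CA.e α)
        rw [CA.e_mul_self α hα, map_sum, phi_e g α hα, CA.e_mul_self _ hαg,
          wsupp_wperm, Finset.sum_image (fun x _ y _ h => g.injective h)] at h1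
        simp only [map_smul, phi_t] at h1
        exact t_coeff _ _ _ g h1 i (by simp [wsupp, hi])
    · intro hreg g hg x y
      obtain ⟨ha, hb, hc⟩ := hreg g hg
      have key_te : ∀ (i : Fin n) (β : Word n), IsStar C β →
          φ g (CA.mul (CA.t i) (CA.e β)) = CA.mul (φ g (CA.t i)) (φ g (CA.e β)) := by
        intro i β hβ
        have hβg := hβ.wperm_star (hG g hg β hβ.1)
        rw [phi_t, phi_e g β hβ, CA.t_mul_e i β hβ, CA.t_mul_e _ _ hβg, wperm_apply_apply]
        by_cases hi : β i = 1
        · rw [if_pos hi, if_pos hi, map_smul, phi_e g β hβ, ha i β hβ hi]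
        · rw [if_neg hi, if_neg hi, map_zero]
      have key : ∀ k l, φ g (CA.mul (CA.bas k) (CA.bas l))
          = CA.mul (φ g (CA.bas k)) (φ g (CA.bas l)) := by
        intro k l
        rcases k with i | ⟨α, hα⟩ <;> rcases l with j | ⟨β, hβ⟩
        · rw [CA.bas_t, CA.bas_t, CA.t_mul_t, phi_t, phi_t, CA.t_mul_t]
          by_cases h : i = j
          · subst h; rw [if_pos rfl, if_pos rfl, phi_t]
          · rw [if_neg h, if_neg (fun hh => h (g.injective hh)), map_zero]
        · rw [CA.bas_t, CA.bas_e]; exact key_te i β hβ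
        · rw [CA.bas_e, CA.bas_t, CA.mul_comm, CA.mul_comm (φ g (CA.e α))]
          exact key_te j α hα
        · rw [CA.bas_e, CA.bas_e]
          have hαg := hα.wperm_star (hG g hg α hα.1)
          have hβg := hβ.wperm_star (hG g hg β hβ.1)
          by_cases hab : α = β
          · subst hab
            rw [CA.e_mul_self α hα, phi_e g α hα, CA.e_mul_self _ hαg, map_sum,
              wsupp_wperm, Finset.sum_image (fun x _ y _ h => g.injective h)]
            refine Finset.sum_congr rfl fun i hi => ?_
            rw [map_smul, phi_t, ← hc i α hα (by simpa [wsupp] using hi)]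
          · by_cases hone : α + β = 1
            · rw [CA.e_mul_compl α β hα hβ hone, phi_e g α hα, phi_e g β hβ,
                CA.e_mul_compl _ _ hαg hβg (by rw [← wperm_add, hone, wperm_word_one]),
                map_zero]
            · have hsum := hα.add_star hβ hab hone
              have hneg : wperm g α ≠ wperm g β := fun h => hab (wperm_injective g h)
              have honeg : wperm g α + wperm g β ≠ 1 := by
                rw [← wperm_add, ← wperm_word_one g]
                exact fun h => hone (wperm_injective g h)
              rw [CA.e_mul_e α β hα hβ hab hone, phi_e g α hα, phi_e g β hβ,
                CA.e_mul_e _ _ hαg hβg hneg honeg, map_smul, phi_e g _ hsum,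
                ← wperm_add, hb α β hα hβ hab hone]
      have heq : LinearMap.compr₂ CA.mul (φ g) = CA.mul.compl₁₂ (φ g) (φ g) := by
        apply CA.bas.ext; intro k
        apply CA.bas.ext; intro l
        simpa using key k l
      have h2 := LinearMap.congr_fun (LinearMap.congr_fun heq x) y
      simpa using h2
  · intro g hg h hh heq
    apply Equiv.ext
    intro i
    have h1 := LinearMap.congr_fun heq (CA.t i)
    rw [phi_t, phi_t, ← CA.bas_t, ← CA.bas_t] at h1
    exact Sum.inl_injective (CA.bas.injective h1)
end

section
/- A non-degenerate code algebra A_C(Λ) is simple (has no non-trivial proper two-sided ideals) unless C = {𝟎, 𝟏, α, α^c} for some α. -/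
open scoped Classical

section Prj
variable {F : Type*} [Field F] {A : Type*} [AddCommGroup A] [Module F A]
  {S : Type*} (bas : Module.Basis S F A)

noncomputable def prj (P : S → Prop) (x : A) : A :=
  bas.repr.symm ((bas.repr x).filter P)

theorem repr_prj (P : S → Prop) (x : A) :
    bas.repr (prj bas P x) = (bas.repr x).filter P := by
  simp [prj]

theorem prj_apply (P : S → Prop) (x : A) (s : S) :
    bas.repr (prj bas P x) s = if P s then bas.repr x s else 0 := by
  rw [repr_prj, Finsupp.filter_apply]

theorem prj_eq_self {P : S → Prop} {x : A}
    (h : ∀ s ∈ (bas.repr x).support, P s) : prj bas P x = x := by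
  have : (bas.repr x).filter P = bas.repr x := by
    ext s
    rw [Finsupp.filter_apply]
    by_cases hs : s ∈ (bas.repr x).support
    · rw [if_pos (h s hs)]
    · simp only [Finsupp.notMem_support_iff] at hs
      simp [hs]
  rw [prj, this, LinearEquiv.symm_apply_apply]

theorem prj_congr {P Q : S → Prop} (h : ∀ s, P s ↔ Q s) (x : A) :
    prj bas P x = prj bas Q x := by
  rw [show P = Q from funext fun s => propext (h s)]

theorem prj_prj (P Q : S → Prop) (x : A) :
    prj bas P (prj bas Q x) = prj bas (fun s => P s ∧ Q s) x := by
  apply bas.repr.injective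
  rw [repr_prj, repr_prj, repr_prj]
  ext s
  simp only [Finsupp.filter_apply]
  split_ifs <;> tauto

theorem repr_diag (f : A →ₗ[F] A) (d : S → F)
    (hd : ∀ s, f (bas s) = d s • bas s) (x : A) (s : S) :
    bas.repr (f x) s = d s * bas.repr x s := by
  have h1 : f x = (bas.repr x).sum fun s c => (d s * c) • bas s := by
    conv_lhs => rw [← bas.linearCombination_repr x]
    rw [Finsupp.linearCombination_apply, map_finsuppSum]
    refine Finsupp.sum_congr fun s' _ => ?_
    rw [map_smul, hd, smul_smul, mul_comm]
  rw [h1, map_finsuppSum]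
  simp only [map_smul, Module.Basis.repr_self, Finsupp.smul_single, smul_eq_mul, mul_one]
  rw [Finsupp.sum_apply]
  rw [Finsupp.sum]
  simp only [Finsupp.single_apply]
  rw [Finset.sum_ite_eq' (bas.repr x).support s fun s' => d s' * bas.repr x s']
  by_cases hs : s ∈ (bas.repr x).support
  · rw [if_pos hs]
  · rw [if_neg hs]
    simp only [Finsupp.notMem_support_iff] at hs
    rw [hs, mul_zero]

theorem eigen_extract (I : Submodule F A) (f : A →ₗ[F] A)
    (hfI : ∀ y ∈ I, f y ∈ I) (d : S → F)
    (hd : ∀ s, f (bas s) = d s • bas s) (lam : F) :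
    ∀ x ∈ I, prj bas (fun s => d s = lam) x ∈ I := by
  suffices H : ∀ (N : ℕ) (x : A), x ∈ I →
      ((((bas.repr x).support.filter fun s => ¬ d s = lam).image d).card ≤ N) →
      prj bas (fun s => d s = lam) x ∈ I by
    intro x hx
    exact H _ x hx le_rfl
  intro N
  induction N with
  | zero =>
    intro x hx hcard
    have himg : (((bas.repr x).support.filter fun s => ¬ d s = lam).image d) = ∅ :=
      Finset.card_eq_zero.mp (Nat.le_zero.mp hcard)
    have hflt : ((bas.repr x).support.filter fun s => ¬ d s = lam) = ∅ :=
      Finset.image_eq_empty.mp himg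
    have : ∀ s ∈ (bas.repr x).support, d s = lam := by
      intro s hs
      by_contra hne
      have : s ∈ ((bas.repr x).support.filter fun s => ¬ d s = lam) :=
        Finset.mem_filter.mpr ⟨hs, hne⟩
      rw [hflt] at this
      exact absurd this (Finset.notMem_empty s)
    rw [prj_eq_self bas this]
    exact hx
  | succ N ih =>
    intro x hx hcard
    by_cases hemp : (((bas.repr x).support.filter fun s => ¬ d s = lam).image d) = ∅
    · have hflt : ((bas.repr x).support.filter fun s => ¬ d s = lam) = ∅ :=
        Finset.image_eq_empty.mp hemp
      have : ∀ s ∈ (bas.repr x).support, d s = lam := by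
        intro s hs
        by_contra hne
        have : s ∈ ((bas.repr x).support.filter fun s => ¬ d s = lam) :=
          Finset.mem_filter.mpr ⟨hs, hne⟩
        rw [hflt] at this
        exact absurd this (Finset.notMem_empty s)
      rw [prj_eq_self bas this]
      exact hx
    · obtain ⟨v, hv⟩ := Finset.nonempty_iff_ne_empty.mpr hemp
      obtain ⟨s₀, hs₀, hvs₀⟩ := Finset.mem_image.mp hv
      have hs₀' := Finset.mem_filter.mp hs₀
      have hvlam : v ≠ lam := by rw [← hvs₀]; exact hs₀'.2
      set y := f x - v • x with hy
      have hyI : y ∈ I := sub_mem (hfI x hx) (Submodule.smul_mem I v hx)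
      have hry : ∀ s, bas.repr y s = (d s - v) * bas.repr x s := by
        intro s
        rw [hy, map_sub, map_smul, Finsupp.sub_apply, Finsupp.smul_apply,
          repr_diag bas f d hd, smul_eq_mul, sub_mul]
      -- support of y subset
      have hsub : (((bas.repr y).support.filter fun s => ¬ d s = lam).image d) ⊆
          ((((bas.repr x).support.filter fun s => ¬ d s = lam).image d).erase v) := by
        intro w hw
        obtain ⟨s, hs, hws⟩ := Finset.mem_image.mp hw
        have hs' := Finset.mem_filter.mp hs
        have hsy : bas.repr y s ≠ 0 := Finsupp.mem_support_iff.mp hs'.1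
        rw [hry s] at hsy
        have hx0 : bas.repr x s ≠ 0 := fun h => hsy (by rw [h, mul_zero])
        have hdv : d s ≠ v := fun h => hsy (by rw [h, sub_self, zero_mul])
        refine Finset.mem_erase.mpr ⟨by rw [← hws]; exact hdv, ?_⟩
        exact Finset.mem_image.mpr ⟨s, Finset.mem_filter.mpr
          ⟨Finsupp.mem_support_iff.mpr hx0, hs'.2⟩, hws⟩
      have hcard' : (((bas.repr y).support.filter fun s => ¬ d s = lam).image d).card ≤ N := by
        calc _ ≤ _ := Finset.card_le_card hsub
        _ ≤ N := by
            rw [Finset.card_erase_of_mem hv]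
            omega
      have hyprj := ih y hyI hcard'
      have hkey : prj bas (fun s => d s = lam) y =
          (lam - v) • prj bas (fun s => d s = lam) x := by
        apply bas.repr.injective
        ext s
        rw [map_smul, Finsupp.smul_apply, prj_apply, prj_apply, hry s, smul_eq_mul]
        split_ifs with h
        · rw [h]
        · rw [mul_zero]
      have h0 : lam - v ≠ 0 := sub_ne_zero.mpr (Ne.symm hvlam)
      have : prj bas (fun s => d s = lam) x =
          (lam - v)⁻¹ • prj bas (fun s => d s = lam) y := by
        rw [hkey, smul_smul, inv_mul_cancel₀ h0, one_smul]
      rw [this]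
      exact Submodule.smul_mem I _ hyprj

theorem eq_of_support_subset_single {y : A} {s₁ : S}
    (h : ∀ s ∈ (bas.repr y).support, s = s₁) : y = bas.repr y s₁ • bas s₁ := by
  apply bas.repr.injective
  ext s
  rw [map_smul, Module.Basis.repr_self, Finsupp.smul_apply, Finsupp.single_apply]
  by_cases hs : s₁ = s
  · subst hs; simp
  · simp only [if_neg hs, smul_zero]
    by_contra h0
    exact hs (h s (Finsupp.mem_support_iff.mpr h0)).symm

theorem eq_of_support_subset_pair {y : A} {s₁ s₂ : S}
    (h : ∀ s ∈ (bas.repr y).support, s = s₁ ∨ s = s₂) (hne : s₁ ≠ s₂) :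
    y = bas.repr y s₁ • bas s₁ + bas.repr y s₂ • bas s₂ := by
  apply bas.repr.injective
  ext s
  rw [map_add, map_smul, map_smul, Module.Basis.repr_self, Module.Basis.repr_self, Finsupp.add_apply,
    Finsupp.smul_apply, Finsupp.smul_apply, Finsupp.single_apply, Finsupp.single_apply]
  by_cases h1 : s₁ = s
  · subst h1
    rw [if_pos rfl, if_neg (fun h2 => hne h2.symm)]
    simp
  · by_cases h2 : s₂ = s
    · subst h2; simp [if_neg h1]
    · simp only [if_neg h1, if_neg h2, smul_zero, add_zero]
      by_contra h0
      rcases h s (Finsupp.mem_support_iff.mpr h0) with h' | h' <;>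
        [exact h1 h'.symm; exact h2 h'.symm]
end Prj
section Words
variable {n : ℕ}

theorem zmod2_cases (x : ZMod 2) : x = 0 ∨ x = 1 := by revert x; decide

theorem word_add_self (α : Word n) : α + α = 0 := by
  funext i
  show α i + α i = 0
  rcases zmod2_cases (α i) with h | h <;> rw [h] <;> decide

theorem word_ne_one_of_ne {α : Word n} (i : Fin n) (h : ¬ α i = 1) : α i = 0 := by
  rcases zmod2_cases (α i) with h1 | h1
  · exact h1
  · exact absurd h1 h

theorem word_eq_of_iff {α β : Word n} (h : ∀ i, α i = 1 ↔ β i = 1) : α = β := by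
  funext i
  by_cases hα : α i = 1
  · rw [hα, (h i).mp hα]
  · have hβ : ¬ β i = 1 := fun hb => hα ((h i).mpr hb)
    rw [word_ne_one_of_ne i hα, word_ne_one_of_ne i hβ]

theorem mem_wsupp {α : Word n} {i : Fin n} : i ∈ wsupp α ↔ α i = 1 := by
  simp [wsupp]

theorem word_exists_one {α : Word n} (h : α ≠ 0) : ∃ i, α i = 1 := by
  by_contra hno
  push_neg at hno
  exact h (funext fun i => word_ne_one_of_ne i (hno i))

theorem word_exists_zero {α : Word n} (h : α ≠ 1) : ∃ i, α i = 0 := by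
  by_contra hno
  push_neg at hno
  refine h (funext fun i => ?_)
  rcases zmod2_cases (α i) with h1 | h1
  · exact absurd h1 (hno i)
  · exact h1

theorem word_eq_of_add_eq {α β γ : Word n} (h : α + β = γ) : α = γ + β := by
  rw [← h, add_assoc, word_add_self, add_zero]

end Words

section Code
variable {F : Type*} [Field F] {n : ℕ} {C : Submodule (ZMod 2) (Word n)}
  {a : Fin n → Word n → F} {b : Word n → Word n → F} {c : Fin n → Word n → F}

theorem supp_star (hnd : Nondeg C a b c) (i : Fin n) :
    ∃ α, IsStar C α ∧ α i = 1 := by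
  obtain ⟨γ, hγC, hγi⟩ := hnd.1 i
  have hγ0 : γ ≠ 0 := fun h => by rw [h] at hγi; simp at hγi
  by_cases hγ1 : γ = 1
  · -- 1 ∈ C; take any star β
    obtain ⟨β, hβ⟩ := hnd.2.1
    by_cases hβi : β i = 1
    · exact ⟨β, hβ, hβi⟩
    · refine ⟨1 + β, ⟨C.add_mem (hγ1 ▸ hγC) hβ.1, ?_, ?_⟩, ?_⟩
      · intro h
        exact hβ.2.2 (by rw [word_eq_of_add_eq h, zero_add])
      · intro h
        exact hβ.2.1 (add_eq_left.mp h)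
      · show (1 : Word n) i + β i = 1
        rw [word_ne_one_of_ne i hβi, Pi.one_apply]
        decide
  · exact ⟨γ, ⟨hγC, hγ0, hγ1⟩, hγi⟩

theorem exists_third_star (hnd : Nondeg C a b c)
    (hC : ¬ ∃ α : Word n, (C : Set (Word n)) = {0, 1, α, 1 + α})
    {χ : Word n} (hχ : IsStar C χ) :
    ∃ β, IsStar C β ∧ β ≠ χ ∧ β + χ ≠ 1 := by
  by_contra hno
  push_neg at hno
  -- every star is χ or 1 + χ
  have hall : ∀ β, IsStar C β → β = χ ∨ β = 1 + χ := by
    intro β hβ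
    by_cases h1 : β = χ
    · exact Or.inl h1
    · exact Or.inr (word_eq_of_add_eq (hno β hβ h1))
  by_cases h1C : (1 : Word n) ∈ C
  · -- C = {0, 1, χ, 1+χ}
    refine hC ⟨χ, Set.ext fun γ => ⟨fun hγ => ?_, fun hγ => ?_⟩⟩
    · by_cases hγ0 : γ = 0
      · exact Or.inl hγ0
      by_cases hγ1 : γ = 1
      · exact Or.inr (Or.inl hγ1)
      rcases hall γ ⟨hγ, hγ0, hγ1⟩ with h | h
      · exact Or.inr (Or.inr (Or.inl h))
      · exact Or.inr (Or.inr (Or.inr h))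
    · rcases hγ with h | h | h | h
      · rw [h]; exact C.zero_mem
      · rw [h]; exact h1C
      · rw [h]; exact hχ.1
      · rw [h]; exact C.add_mem h1C hχ.1
  · -- 1 ∉ C: all stars = χ, so χ covers all coords, χ = 1, contra
    have hone : ∀ i, χ i = 1 := by
      intro i
      obtain ⟨β, hβ, hβi⟩ := supp_star hnd i
      rcases hall β hβ with h | h
      · rw [← h]; exact hβi
      · exfalso
        have : (1 : Word n) ∈ C := by
          have : (1 : Word n) = β + χ := by
            rw [h, add_assoc, word_add_self, add_zero]
          rw [this]
          exact C.add_mem hβ.1 hχ.1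
        exact h1C this
    exact hχ.2.2 (funext fun i => hone i)

theorem star_add_star {α β : Word n} (hα : IsStar C α) (hβ : IsStar C β)
    (hne : α ≠ β) (hc : α + β ≠ 1) : IsStar C (α + β) := by
  refine ⟨C.add_mem hα.1 hβ.1, fun h => ?_, hc⟩
  have := word_eq_of_add_eq h
  rw [zero_add] at this
  exact hne this

end Code
section Alg
variable {F : Type*} [Field F] {n : ℕ} {C : Submodule (ZMod 2) (Word n)}
  {a : Fin n → Word n → F} {b : Word n → Word n → F} {c : Fin n → Word n → F}
  {A : Type*} [AddCommGroup A] [Module F A]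

/-- The eigenvalue of `bas s` under left multiplication by `t i`. -/
def DFun (a : Fin n → Word n → F) (C : Submodule (ZMod 2) (Word n)) :
    (Fin n ⊕ {α : Word n // IsStar C α}) → Fin n → F
  | Sum.inl j => fun i => if i = j then 1 else 0
  | Sum.inr α => fun i => if α.1 i = 1 then a i α.1 else 0

theorem mul_t_bas (CA : CodeAlgebra F C a b c A) (i : Fin n)
    (s : Fin n ⊕ {α : Word n // IsStar C α}) :
    CA.mul (CA.t i) (CA.bas s) = DFun a C s i • CA.bas s := by
  cases s with
  | inl j =>
    rw [CA.bas_t, CA.t_mul_t]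
    simp only [DFun]
    by_cases h : i = j
    · subst h; rw [if_pos rfl, if_pos rfl, one_smul]
    · rw [if_neg h, if_neg h, zero_smul]
  | inr α =>
    rw [CA.bas_e, CA.t_mul_e i α.1 α.2]
    simp only [DFun]
    by_cases h : α.1 i = 1
    · rw [if_pos h, if_pos h]
    · rw [if_neg h, if_neg h, zero_smul]

theorem D_classify (hnd : Nondeg C a b c)
    (s s' : Fin n ⊕ {α : Word n // IsStar C α})
    (h : ∀ i, DFun a C s i = DFun a C s' i) :
    s = s' ∨ ∃ (j : Fin n) (α : {α : Word n // IsStar C α}), wsupp α.1 = {j} ∧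
      ((s = Sum.inl j ∧ s' = Sum.inr α) ∨ (s = Sum.inr α ∧ s' = Sum.inl j)) := by
  have key : ∀ (j : Fin n) (α : {α : Word n // IsStar C α}),
      (∀ i, DFun a C (Sum.inl j) i = DFun a C (Sum.inr α) i) → wsupp α.1 = {j} := by
    intro j α hj
    ext i
    rw [mem_wsupp, Finset.mem_singleton]
    have hi := hj i
    simp only [DFun] at hi
    constructor
    · intro h1
      by_contra hij
      rw [if_neg hij, if_pos h1] at hi
      exact hnd.2.2.1 i α.1 α.2 h1 hi.symm
    · intro h1
      subst h1
      by_contra h1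
      rw [if_pos rfl, if_neg h1] at hi
      exact one_ne_zero hi
  cases s with
  | inl j =>
    cases s' with
    | inl j' =>
      left
      have hi := h j
      simp only [DFun] at hi
      rw [if_pos trivial] at hi
      by_cases hjj : j = j'
      · rw [hjj]
      · rw [if_neg hjj] at hi; exact absurd hi one_ne_zero
    | inr α =>
      right
      exact ⟨j, α, key j α h, Or.inl ⟨rfl, rfl⟩⟩
  | inr α =>
    cases s' with
    | inl j =>
      right
      exact ⟨j, α, key j α (fun i => (h i).symm), Or.inr ⟨rfl, rfl⟩⟩
    | inr α' =>
      left
      have : α.1 = α'.1 := by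
        apply word_eq_of_iff
        intro i
        have hi := h i
        simp only [DFun] at hi
        constructor
        · intro h1
          by_contra h2
          rw [if_pos h1, if_neg h2] at hi
          exact hnd.2.2.1 i α.1 α.2 h1 hi
        · intro h1
          by_contra h2
          rw [if_neg h2, if_pos h1] at hi
          exact hnd.2.2.1 i α'.1 α'.2 h1 hi.symm
      rw [Subtype.ext this]

theorem e_mem_of_t_mem (CA : CodeAlgebra F C a b c A) (hnd : Nondeg C a b c)
    (I : Submodule F A) (hI : ∀ x : A, ∀ y ∈ I, CA.mul x y ∈ I)
    {α : Word n} (hα : IsStar C α) {i : Fin n} (hi : α i = 1)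
    (hti : CA.t i ∈ I) : CA.e α ∈ I := by
  have h1 : CA.mul (CA.t i) (CA.e α) ∈ I := by
    rw [CA.mul_comm]; exact hI (CA.e α) _ hti
  rw [CA.t_mul_e i α hα, if_pos hi] at h1
  have ha := hnd.2.2.1 i α hα hi
  have : CA.e α = (a i α)⁻¹ • (a i α • CA.e α) := by
    rw [smul_smul, inv_mul_cancel₀ ha, one_smul]
  rw [this]
  exact Submodule.smul_mem I _ h1

theorem t_mem_of_e_mem (CA : CodeAlgebra F C a b c A) (hnd : Nondeg C a b c)
    (I : Submodule F A) (hI : ∀ x : A, ∀ y ∈ I, CA.mul x y ∈ I)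
    {α : Word n} (hα : IsStar C α) (he : CA.e α ∈ I)
    {k : Fin n} (hk : α k = 1) : CA.t k ∈ I := by
  have h1 : CA.mul (CA.e α) (CA.e α) ∈ I := hI _ _ he
  rw [CA.e_mul_self α hα] at h1
  have h2 : CA.mul (CA.t k) (∑ i ∈ wsupp α, c i α • CA.t i) ∈ I := hI _ _ h1
  have h3 : CA.mul (CA.t k) (∑ i ∈ wsupp α, c i α • CA.t i) = c k α • CA.t k := by
    rw [map_sum]
    have hterm : ∀ i ∈ wsupp α, (CA.mul (CA.t k)) (c i α • CA.t i) =
        if i = k then c i α • CA.t k else 0 := by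
      intro i _
      rw [map_smul, CA.t_mul_t k i]
      by_cases h : k = i
      · subst h; rw [if_pos rfl, if_pos rfl]
      · rw [if_neg h, if_neg (Ne.symm h), smul_zero]
    rw [Finset.sum_congr rfl hterm,
      Finset.sum_ite_eq' (wsupp α) k (fun i => c i α • CA.t k), if_pos (mem_wsupp.mpr hk)]
  rw [h3] at h2
  have hc := hnd.2.2.2.2 k α hα hk
  have : CA.t k = (c k α)⁻¹ • (c k α • CA.t k) := by
    rw [smul_smul, inv_mul_cancel₀ hc, one_smul]
  rw [this]
  exact Submodule.smul_mem I _ h2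

theorem stepA (CA : CodeAlgebra F C a b c A) (hnd : Nondeg C a b c)
    (hC : ¬ ∃ α : Word n, (C : Set (Word n)) = {0, 1, α, 1 + α})
    (I : Submodule F A) (hI : ∀ x : A, ∀ y ∈ I, CA.mul x y ∈ I)
    {j : Fin n} (hj : CA.t j ∈ I) : I = ⊤ := by
  have closure : ∀ (α : Word n), IsStar C α → ∀ i, α i = 1 → CA.t i ∈ I →
      ∀ k, α k = 1 → CA.t k ∈ I := by
    intro α hα i hi hti k hk
    exact t_mem_of_e_mem CA hnd I hI hα (e_mem_of_t_mem CA hnd I hI hα hi hti) hk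
  have hall : ∀ k, CA.t k ∈ I := by
    by_contra hk0
    push_neg at hk0
    obtain ⟨k, hk⟩ := hk0
    obtain ⟨α₁, hα₁, hα₁j⟩ := supp_star hnd j
    have hin₁ : ∀ i, α₁ i = 1 → CA.t i ∈ I := closure α₁ hα₁ j hα₁j hj
    obtain ⟨α₂, hα₂, hα₂k⟩ := supp_star hnd k
    have hout₂ : ∀ i, α₂ i = 1 → CA.t i ∉ I := by
      intro i hi hti
      exact hk (closure α₂ hα₂ i hi hti k hα₂k)
    have pair : ∀ (β γ : Word n), IsStar C β → IsStar C γ → (∀ i, β i = 1 → CA.t i ∈ I) →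
        (∀ i, γ i = 1 → CA.t i ∉ I) → β + γ = 1 := by
      intro β γ hβ hγ hin hout
      obtain ⟨iβ, hiβ⟩ := word_exists_one hβ.2.1
      obtain ⟨iγ, hiγ⟩ := word_exists_one hγ.2.1
      by_contra hne1
      have hβγ : β ≠ γ := fun h => hout iβ (h ▸ hiβ) (hin iβ hiβ)
      have hδ : IsStar C (β + γ) := star_add_star hβ hγ hβγ hne1
      have hδiβ : (β + γ) iβ = 1 := by
        show β iβ + γ iβ = 1
        rw [hiβ, word_ne_one_of_ne iβ (fun h => hout iβ h (hin iβ hiβ)), add_zero]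
      have hδin := closure (β + γ) hδ iβ hδiβ (hin iβ hiβ)
      have hδiγ : (β + γ) iγ = 1 := by
        show β iγ + γ iγ = 1
        rw [word_ne_one_of_ne iγ (fun h => hout iγ hiγ (hin iγ h)), hiγ, zero_add]
      exact hout iγ hiγ (hδin iγ hδiγ)
    have h12 : α₁ + α₂ = 1 := pair α₁ α₂ hα₁ hα₂ hin₁ hout₂
    have hα₂eq : α₂ = 1 + α₁ := by
      rw [add_comm] at h12
      exact word_eq_of_add_eq h12
    have hstar : ∀ β, IsStar C β → β = α₁ ∨ β = 1 + α₁ := by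
      intro β hβ
      by_cases hin : ∃ i, β i = 1 ∧ CA.t i ∈ I
      · obtain ⟨i, hi, hti⟩ := hin
        left
        have hβ2 := pair β α₂ hβ hα₂ (closure β hβ i hi hti) hout₂
        have h2 : β = 1 + α₂ := word_eq_of_add_eq hβ2
        have h3 : α₁ = 1 + α₂ := word_eq_of_add_eq h12
        rw [h2, h3]
      · push_neg at hin
        right
        have hβ2 := pair α₁ β hα₁ hβ hin₁ hin
        rw [add_comm] at hβ2
        exact word_eq_of_add_eq hβ2
    refine hC ⟨α₁, Set.ext fun γ => ⟨fun hγ => ?_, fun hγ => ?_⟩⟩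
    · by_cases h0 : γ = 0
      · exact Or.inl h0
      by_cases h1 : γ = 1
      · exact Or.inr (Or.inl h1)
      rcases hstar γ ⟨hγ, h0, h1⟩ with h | h
      · exact Or.inr (Or.inr (Or.inl h))
      · exact Or.inr (Or.inr (Or.inr h))
    · rcases hγ with h | h | h | h
      · rw [h]; exact C.zero_mem
      · rw [h, ← h12]; exact C.add_mem hα₁.1 hα₂.1
      · rw [h]; exact hα₁.1
      · rw [h, ← hα₂eq]; exact hα₂.1
  have hbas : ∀ s, CA.bas s ∈ I := by
    intro s
    cases s with
    | inl i => rw [CA.bas_t]; exact hall i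
    | inr α =>
      rw [CA.bas_e]
      obtain ⟨i, hi⟩ := word_exists_one α.2.2.1
      exact e_mem_of_t_mem CA hnd I hI α.2 hi (hall i)
  rw [eq_top_iff, ← CA.bas.span_eq]
  exact Submodule.span_le.mpr (by rintro y ⟨s, rfl⟩; exact hbas s)

end Alg
/-- Theorem 3.8: a non-degenerate code algebra is simple unless C = {0, 1, α, α^c}. -/
theorem code_algebra_simple {F : Type*} [Field F] {n : ℕ}
    {C : Submodule (ZMod 2) (Word n)}
    {a : Fin n → Word n → F} {b : Word n → Word n → F} {c : Fin n → Word n → F}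
    {A : Type*} [AddCommGroup A] [Module F A]
    (CA : CodeAlgebra F C a b c A)
    (hnd : Nondeg C a b c)
    (hC : ¬ ∃ α : Word n, (C : Set (Word n)) = {0, 1, α, 1 + α}) :
    ∀ I : Submodule F A, (∀ x : A, ∀ y ∈ I, CA.mul x y ∈ I) → I = ⊥ ∨ I = ⊤ := by
  intro I hI
  by_cases hbot : I = ⊥
  · exact Or.inl hbot
  right
  obtain ⟨x, hxI, hx0⟩ := (Submodule.ne_bot_iff I).mp hbot
  have hrx : CA.bas.repr x ≠ 0 := fun h => hx0 (by
    have := congrArg CA.bas.repr.symm h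
    rwa [LinearEquiv.symm_apply_apply, map_zero] at this)
  obtain ⟨s₀, hs₀⟩ := Finsupp.support_nonempty_iff.mpr hrx
  have hfI : ∀ i : Fin n, ∀ y ∈ I, CA.mul (CA.t i) y ∈ I := fun i y hy => hI _ y hy
  have hjoint : ∀ T : Finset (Fin n),
      prj CA.bas (fun s => ∀ i ∈ T, DFun a C s i = DFun a C s₀ i) x ∈ I := by
    intro T
    induction T using Finset.induction_on with
    | empty =>
      rw [prj_eq_self CA.bas (fun s _ => by simp)]
      exact hxI
    | @insert i T hins ih =>
      have h1 := eigen_extract CA.bas I (CA.mul (CA.t i)) (hfI i) (fun s => DFun a C s i)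
        (fun s => mul_t_bas CA i s) (DFun a C s₀ i) _ ih
      rw [prj_prj] at h1
      have heq : prj CA.bas (fun s => ∀ j ∈ insert i T, DFun a C s j = DFun a C s₀ j) x
          = prj CA.bas (fun s => DFun a C s i = DFun a C s₀ i ∧
              ∀ j ∈ T, DFun a C s j = DFun a C s₀ j) x :=
        prj_congr CA.bas (fun s => by simp [Finset.forall_mem_insert]) x
      rw [heq]
      exact h1
  set y := prj CA.bas (fun s => ∀ i ∈ Finset.univ, DFun a C s i = DFun a C s₀ i) x with hy
  have hyI : y ∈ I := hjoint Finset.univ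
  have hclass : ∀ s ∈ (CA.bas.repr y).support, ∀ i, DFun a C s i = DFun a C s₀ i := by
    intro s hs i
    have hne := Finsupp.mem_support_iff.mp hs
    rw [hy, prj_apply CA.bas _ x s] at hne
    by_cases h : (∀ i ∈ Finset.univ, DFun a C s i = DFun a C s₀ i)
    · exact h i (Finset.mem_univ i)
    · rw [if_neg h] at hne; exact absurd rfl hne
  have hy0 : CA.bas.repr y s₀ ≠ 0 := by
    rw [hy, prj_apply CA.bas _ x s₀, if_pos (fun i _ => rfl)]
    exact Finsupp.mem_support_iff.mp hs₀
  have hEnd : ∃ j, CA.t j ∈ I := by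
    by_cases hE : ∃ α : {α : Word n // IsStar C α}, CA.bas.repr y (Sum.inr α) ≠ 0
    · obtain ⟨α, hμ⟩ := hE
      have hαsupp : (Sum.inr α : Fin n ⊕ {α : Word n // IsStar C α}) ∈
          (CA.bas.repr y).support := Finsupp.mem_support_iff.mpr hμ
      have hclassα : ∀ s ∈ (CA.bas.repr y).support, ∀ i,
          DFun a C s i = DFun a C (Sum.inr α) i :=
        fun s hs i => (hclass s hs i).trans (hclass _ hαsupp i).symm
      have hestar : ∃ γ, IsStar C γ ∧ CA.e γ ∈ I := by
        by_cases hL : ∃ j, CA.bas.repr y (Sum.inl j) ≠ 0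
        · obtain ⟨j, hlam0⟩ := hL
          have hjsupp : (Sum.inl j : Fin n ⊕ {α : Word n // IsStar C α}) ∈
              (CA.bas.repr y).support := Finsupp.mem_support_iff.mpr hlam0
          have hw : wsupp α.1 = {j} := by
            rcases D_classify hnd (Sum.inl j) (Sum.inr α) (fun i => hclassα _ hjsupp i) with
              h | ⟨j', α', hw', hcase⟩
            · exact absurd h (by simp)
            · rcases hcase with ⟨h1, h2⟩ | ⟨h1, h2⟩
              · have hj' : j = j' := Sum.inl.inj h1
                have hα' : α = α' := Sum.inr.inj h2
                rw [← hα', ← hj'] at hw'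
                exact hw'
              · exact absurd h1 (by simp)
          have hsub : ∀ s ∈ (CA.bas.repr y).support,
              s = Sum.inl j ∨ s = Sum.inr α := by
            intro s hs
            rcases D_classify hnd s (Sum.inr α) (fun i => hclassα s hs i) with
              h | ⟨j', α', hw', hcase⟩
            · exact Or.inr h
            · rcases hcase with ⟨h1, h2⟩ | ⟨h1, h2⟩
              · have hα' : α = α' := Sum.inr.inj h2
                rw [← hα'] at hw'
                have hjj : j' = j := Finset.singleton_inj.mp (hw'.symm.trans hw)
                rw [h1, hjj]
                exact Or.inl rfl
              · exact absurd h2 (by simp)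
          have hy_eq := eq_of_support_subset_pair CA.bas hsub Sum.inl_ne_inr
          rw [CA.bas_t, CA.bas_e] at hy_eq
          set lam := CA.bas.repr y (Sum.inl j) with hlam
          set mu := CA.bas.repr y (Sum.inr α) with hmu
          obtain ⟨β, hβ, hβα, hβα1⟩ := exists_third_star hnd hC α.2
          have hγstar : IsStar C (β + α.1) := star_add_star hβ α.2 hβα hβα1
          have hzI : CA.mul (CA.e β) y ∈ I := hI _ _ hyI
          have hαj : α.1 j = 1 := mem_wsupp.mp (by rw [hw]; exact Finset.mem_singleton_self j)
          have hz_eq : CA.mul (CA.e β) y =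
              (lam * (if β j = 1 then a j β else 0)) • CA.e β +
                (mu * b β α.1) • CA.e (β + α.1) := by
            rw [hy_eq, map_add, map_smul, map_smul, CA.mul_comm (CA.e β) (CA.t j),
              CA.t_mul_e j β hβ, CA.e_mul_e β α.1 hβ α.2 hβα hβα1, smul_smul mu (b β α.1)]
            congr 1
            by_cases hbj : β j = 1
            · rw [if_pos hbj, if_pos hbj, smul_smul]
            · rw [if_neg hbj, if_neg hbj, smul_zero, mul_zero, zero_smul]
          set γs : {α : Word n // IsStar C α} := ⟨β + α.1, hγstar⟩ with hγs
          set βs : {α : Word n // IsStar C α} := ⟨β, hβ⟩ with hβs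
          have hrepr_z : CA.bas.repr (CA.mul (CA.e β) y) =
              Finsupp.single (Sum.inr βs) (lam * (if β j = 1 then a j β else 0)) +
              Finsupp.single (Sum.inr γs) (mu * b β α.1) := by
            rw [hz_eq, show CA.e β = CA.bas (Sum.inr βs) from (CA.bas_e βs).symm,
              show CA.e (β + α.1) = CA.bas (Sum.inr γs) from (CA.bas_e γs).symm,
              map_add, map_smul, map_smul, Module.Basis.repr_self, Module.Basis.repr_self,
              Finsupp.smul_single, Finsupp.smul_single, smul_eq_mul, mul_one,
              smul_eq_mul, mul_one]
          have hsep : ¬ DFun a C (Sum.inr βs) j = DFun a C (Sum.inr γs) j := by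
            show ¬ (if β j = 1 then a j β else 0) =
              (if (β + α.1) j = 1 then a j (β + α.1) else 0)
            rcases zmod2_cases (β j) with h | h
            · have hγ1 : (β + α.1) j = 1 := by
                show β j + α.1 j = 1
                rw [h, hαj, zero_add]
              rw [if_neg (show ¬ β j = 1 by rw [h]; decide), if_pos hγ1]
              intro hcontra
              exact hnd.2.2.1 j (β + α.1) hγstar hγ1 hcontra.symm
            · have hγ0 : ¬ (β + α.1) j = 1 := by
                show ¬ β j + α.1 j = 1
                rw [h, hαj]; decide
              rw [if_pos h, if_neg hγ0]
              exact hnd.2.2.1 j β hβ h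
          have hw2 := eigen_extract CA.bas I (CA.mul (CA.t j)) (hfI j) (fun s => DFun a C s j)
            (fun s => mul_t_bas CA j s) (DFun a C (Sum.inr γs) j) _ hzI
          have hw_eq : prj CA.bas (fun s => DFun a C s j = DFun a C (Sum.inr γs) j)
              (CA.mul (CA.e β) y) = (mu * b β α.1) • CA.e (β + α.1) := by
            rw [prj, hrepr_z, Finsupp.filter_add,
              Finsupp.filter_single_of_neg (fun s => DFun a C s j = DFun a C (Sum.inr γs) j) hsep,
              Finsupp.filter_single_of_pos (fun s => DFun a C s j = DFun a C (Sum.inr γs) j) rfl,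
              zero_add, Module.Basis.repr_symm_single, CA.bas_e γs]
          refine ⟨β + α.1, hγstar, ?_⟩
          have hbne := hnd.2.2.2.1 β α.1 hβ α.2 hβα hβα1
          have hcoef : mu * b β α.1 ≠ 0 := mul_ne_zero hμ hbne
          have hfin : CA.e (β + α.1) =
              (mu * b β α.1)⁻¹ • ((mu * b β α.1) • CA.e (β + α.1)) := by
            rw [smul_smul, inv_mul_cancel₀ hcoef, one_smul]
          rw [hfin, ← hw_eq]
          exact Submodule.smul_mem I _ hw2
        · push_neg at hL
          have hsub : ∀ s ∈ (CA.bas.repr y).support, s = Sum.inr α := by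
            intro s hs
            rcases D_classify hnd s (Sum.inr α) (fun i => hclassα s hs i) with
              h | ⟨j', α', hw', hcase⟩
            · exact h
            · rcases hcase with ⟨h1, h2⟩ | ⟨h1, h2⟩
              · exfalso
                rw [h1] at hs
                exact (Finsupp.mem_support_iff.mp hs) (hL j')
              · exact absurd h2 (by simp)
          have hy_eq := eq_of_support_subset_single CA.bas hsub
          rw [CA.bas_e] at hy_eq
          set mu := CA.bas.repr y (Sum.inr α) with hmu
          refine ⟨α.1, α.2, ?_⟩
          have hfin : CA.e α.1 = mu⁻¹ • y := by
            rw [hy_eq, smul_smul, inv_mul_cancel₀ hμ, one_smul]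
          rw [hfin]
          exact Submodule.smul_mem I _ hyI
      obtain ⟨γ, hγ, heγ⟩ := hestar
      obtain ⟨k, hk⟩ := word_exists_one hγ.2.1
      exact ⟨k, t_mem_of_e_mem CA hnd I hI hγ heγ hk⟩
    · push_neg at hE
      obtain ⟨j, hs₀j⟩ : ∃ j, s₀ = Sum.inl j := by
        cases s₀ with
        | inl j => exact ⟨j, rfl⟩
        | inr α => exact absurd (hE α) hy0
      rw [hs₀j] at hy0
      have hsub : ∀ s ∈ (CA.bas.repr y).support, s = Sum.inl j := by
        intro s hs
        rcases D_classify hnd s (Sum.inl j) (fun i => hs₀j ▸ hclass s hs i) with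
          h | ⟨j', α', hw', hcase⟩
        · exact h
        · rcases hcase with ⟨h1, h2⟩ | ⟨h1, h2⟩
          · exact absurd h2 (by simp)
          · exfalso
            rw [h1] at hs
            exact (Finsupp.mem_support_iff.mp hs) (hE α')
      have hy_eq := eq_of_support_subset_single CA.bas hsub
      rw [CA.bas_t] at hy_eq
      set lam := CA.bas.repr y (Sum.inl j) with hlam
      refine ⟨j, ?_⟩
      have hfin : CA.t j = lam⁻¹ • y := by
        rw [hy_eq, smul_smul, inv_mul_cancel₀ hy0, one_smul]
      rw [hfin]
      exact Submodule.smul_mem I _ hyI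
  obtain ⟨j, hj⟩ := hEnd
  exact stepA CA hnd hC I hI hj
end

section
/- Let A = A_C(Λ) be a non-degenerate code algebra, fix i ∈ {1,…,n}, assume a_{i,α} ≠ 1 for all α ∈ C* with α_i = 1, and let the distinct eigenvalues of ad_{t_i} be 1, 0, a₁, …, a_k with eigenspaces A₁ = span{t_i}, A₀ = span({t_j : j ≠ i} ∪ {e^α : α_i = 0}), A_{a_j} = span{e^β : β_i = 1, a_{i,β} = a_j}. Then the following fusion law holds: A₁·A₁ ⊆ A₁; A₁·A₀ = 0; A₁·A_{a_j} ⊆ A_{a_j}; A₀·A₀ ⊆ A₀; A₀·A_{a_j} ⊆ A_{a₁} ⊕ ⋯ ⊕ A_{a_k}; A_{a_j}·A_{a_l} ⊆ A₀ for j ≠ l; and A_{a_j}·A_{a_j} ⊆ A₁ ⊕ A₀. -/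
private lemma zmod2_eq_of_add_eq_zero : ∀ x y : ZMod 2, x + y = 0 → x = y := by decide

private lemma mulSpan {F A : Type*} [Field F] [AddCommGroup A] [Module F A]
    (f : A →ₗ[F] A →ₗ[F] A) {s u : Set A} {P : Submodule F A}
    (h : ∀ x ∈ s, ∀ y ∈ u, f x y ∈ P) :
    ∀ x ∈ Submodule.span F s, ∀ y ∈ Submodule.span F u, f x y ∈ P := by
  intro x hx
  induction hx using Submodule.span_induction with
  | mem x hxs =>
    intro y hy
    induction hy using Submodule.span_induction with
    | mem y hyu => exact h _ hxs _ hyu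
    | zero => simp
    | add y z _ _ hy hz => rw [map_add]; exact P.add_mem hy hz
    | smul r y _ hy => rw [map_smul]; exact P.smul_mem r hy
  | zero => intro y hy; simp
  | add x z _ _ hx hz => intro y hy; rw [map_add, LinearMap.add_apply];
                         exact P.add_mem (hx y hy) (hz y hy)
  | smul r x _ hx => intro y hy; rw [map_smul, LinearMap.smul_apply];
                     exact P.smul_mem r (hx y hy)


/-- Proposition 3.12: the fusion law for the toral axis t_i. -/
theorem toral_fusion_law {F : Type*} [Field F] {n : ℕ}
    {C : Submodule (ZMod 2) (Word n)}
    {a : Fin n → Word n → F} {b : Word n → Word n → F} {c : Fin n → Word n → F}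
    {A : Type*} [AddCommGroup A] [Module F A]
    (CA : CodeAlgebra F C a b c A)
    (hnd : Nondeg C a b c) (i : Fin n)
    (ha1 : ∀ α, IsStar C α → α i = 1 → a i α ≠ 1)
    (A1 A0 Aneg : Submodule F A) (Aa : F → Submodule F A)
    (hA1 : A1 = Submodule.span F {CA.t i})
    (hA0 : A0 = Submodule.span F
      (CA.t '' {j : Fin n | j ≠ i} ∪ CA.e '' {α : Word n | IsStar C α ∧ α i = 0}))
    (hAa : ∀ μ : F, Aa μ = Submodule.span F
      (CA.e '' {β : Word n | IsStar C β ∧ β i = 1 ∧ a i β = μ}))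
    (hAneg : Aneg = Submodule.span F (CA.e '' {β : Word n | IsStar C β ∧ β i = 1})) :
    -- A₁ ⋆ A₁ ⊆ A₁
    (∀ x ∈ A1, ∀ y ∈ A1, CA.mul x y ∈ A1) ∧
    -- A₁ ⋆ A₀ = 0
    (∀ x ∈ A1, ∀ y ∈ A0, CA.mul x y = 0) ∧
    -- A₁ ⋆ A_(a_j) ⊆ A_(a_j)
    (∀ μ : F, ∀ x ∈ A1, ∀ y ∈ Aa μ, CA.mul x y ∈ Aa μ) ∧
    -- A₀ ⋆ A₀ ⊆ A₀
    (∀ x ∈ A0, ∀ y ∈ A0, CA.mul x y ∈ A0) ∧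
    -- A₀ ⋆ A_(a_j) ⊆ A_(a_1) ⊕ ⋯ ⊕ A_(a_k)
    (∀ μ : F, ∀ x ∈ A0, ∀ y ∈ Aa μ, CA.mul x y ∈ Aneg) ∧
    -- A_(a_j) ⋆ A_(a_l) ⊆ A₀ for j ≠ l
    (∀ μ ν : F, μ ≠ ν → ∀ x ∈ Aa μ, ∀ y ∈ Aa ν, CA.mul x y ∈ A0) ∧
    -- A_(a_j) ⋆ A_(a_j) ⊆ A₁ ⊕ A₀
    (∀ μ : F, ∀ x ∈ Aa μ, ∀ y ∈ Aa μ, CA.mul x y ∈ A1 ⊔ A0) := by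
  subst hA1 hA0 hAneg
  -- abbreviations for generating sets
  set S1 : Set A := {CA.t i} with hS1
  set S0 : Set A :=
    CA.t '' {j : Fin n | j ≠ i} ∪ CA.e '' {α : Word n | IsStar C α ∧ α i = 0} with hS0
  set Sneg : Set A := CA.e '' {β : Word n | IsStar C β ∧ β i = 1} with hSneg
  have ht0 : ∀ j : Fin n, j ≠ i → CA.t j ∈ Submodule.span F S0 := fun j hj =>
    Submodule.subset_span (Set.mem_union_left _ ⟨j, hj, rfl⟩)
  have he0 : ∀ α : Word n, IsStar C α → α i = 0 → CA.e α ∈ Submodule.span F S0 :=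
    fun α h1 h2 => Submodule.subset_span (Set.mem_union_right _ ⟨α, ⟨h1, h2⟩, rfl⟩)
  have heneg : ∀ β : Word n, IsStar C β → β i = 1 → CA.e β ∈ Submodule.span F Sneg :=
    fun β h1 h2 => Submodule.subset_span ⟨β, ⟨h1, h2⟩, rfl⟩
  have hea : ∀ (μ : F) (β : Word n), IsStar C β → β i = 1 → a i β = μ →
      CA.e β ∈ Aa μ := fun μ β h1 h2 h3 => by
    rw [hAa μ]; exact Submodule.subset_span ⟨β, ⟨h1, h2, h3⟩, rfl⟩
  -- star of a sum
  have hstar : ∀ α β : Word n, IsStar C α → IsStar C β → α ≠ β → α + β ≠ 1 →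
      IsStar C (α + β) := by
    intro α β hα hβ hne h1
    refine ⟨C.add_mem hα.1 hβ.1, ?_, h1⟩
    intro h0
    exact hne (funext fun j => zmod2_eq_of_add_eq_zero _ _ (congrFun h0 j))
  refine ⟨?_, ?_, ?_, ?_, ?_, ?_, ?_⟩
  · -- A1 * A1 ⊆ A1
    refine mulSpan CA.mul ?_
    rintro x rfl y rfl
    rw [CA.t_mul_t, if_pos rfl]
    exact Submodule.subset_span rfl
  · -- A1 * A0 = 0
    intro x hx y hy
    refine Submodule.mem_bot F |>.mp ?_
    refine mulSpan CA.mul (P := ⊥) ?_ x hx y hy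
    rintro x rfl y (⟨j, hj, rfl⟩ | ⟨α, ⟨hα, hαi⟩, rfl⟩)
    · rw [Submodule.mem_bot, CA.t_mul_t, if_neg (Ne.symm hj)]
    · rw [Submodule.mem_bot, CA.t_mul_e i α hα, if_neg (by rw [hαi]; decide)]
  · -- A1 * Aa μ ⊆ Aa μ
    intro μ
    rw [hAa μ]
    refine mulSpan CA.mul ?_
    rintro x rfl y ⟨β, ⟨hβ, hβi, hβa⟩, rfl⟩
    rw [CA.t_mul_e i β hβ, if_pos hβi]
    exact Submodule.smul_mem _ _ (Submodule.subset_span ⟨β, ⟨hβ, hβi, hβa⟩, rfl⟩)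
  · -- A0 * A0 ⊆ A0
    refine mulSpan CA.mul ?_
    rintro x (⟨j, hj, rfl⟩ | ⟨α, ⟨hα, hαi⟩, rfl⟩) y (⟨k, hk, rfl⟩ | ⟨β, ⟨hβ, hβi⟩, rfl⟩)
    · rw [CA.t_mul_t]
      split_ifs with h
      · exact ht0 j hj
      · exact Submodule.zero_mem _
    · rw [CA.t_mul_e j β hβ]
      split_ifs with h
      · exact Submodule.smul_mem _ _ (he0 β hβ hβi)
      · exact Submodule.zero_mem _
    · rw [CA.mul_comm, CA.t_mul_e k α hα]
      split_ifs with h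
      · exact Submodule.smul_mem _ _ (he0 α hα hαi)
      · exact Submodule.zero_mem _
    · by_cases hab : α = β
      · subst hab
        rw [CA.e_mul_self α hα]
        refine Submodule.sum_mem _ fun j hj => ?_
        refine Submodule.smul_mem _ _ (ht0 j ?_)
        intro hji
        subst hji
        simp only [wsupp, Finset.mem_filter] at hj
        rw [hαi] at hj
        exact (by decide : (0 : ZMod 2) ≠ 1) hj.2
      · by_cases h1 : α + β = 1
        · rw [CA.e_mul_compl α β hα hβ h1]
          exact Submodule.zero_mem _
        · rw [CA.e_mul_e α β hα hβ hab h1]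
          refine Submodule.smul_mem _ _ (he0 _ (hstar α β hα hβ hab h1) ?_)
          show α i + β i = 0
          rw [hαi, hβi]; decide
  · -- A0 * Aa μ ⊆ Aneg
    intro μ
    rw [hAa μ]
    refine mulSpan CA.mul ?_
    rintro x (⟨j, hj, rfl⟩ | ⟨α, ⟨hα, hαi⟩, rfl⟩) y ⟨β, ⟨hβ, hβi, hβa⟩, rfl⟩
    · rw [CA.t_mul_e j β hβ]
      split_ifs with h
      · exact Submodule.smul_mem _ _ (heneg β hβ hβi)
      · exact Submodule.zero_mem _
    · have hab : α ≠ β := by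
        intro h; rw [h, hβi] at hαi; exact (by decide : (1 : ZMod 2) ≠ 0) hαi
      by_cases h1 : α + β = 1
      · rw [CA.e_mul_compl α β hα hβ h1]
        exact Submodule.zero_mem _
      · rw [CA.e_mul_e α β hα hβ hab h1]
        refine Submodule.smul_mem _ _ (heneg _ (hstar α β hα hβ hab h1) ?_)
        show α i + β i = 1
        rw [hαi, hβi]; decide
  · -- Aa μ * Aa ν ⊆ A0 for μ ≠ ν
    intro μ ν hμν
    rw [hAa μ, hAa ν]
    refine mulSpan CA.mul ?_
    rintro x ⟨β, ⟨hβ, hβi, hβa⟩, rfl⟩ y ⟨γ, ⟨hγ, hγi, hγa⟩, rfl⟩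
    have hbg : β ≠ γ := by
      intro h; rw [h, hγa] at hβa; exact hμν hβa.symm
    by_cases h1 : β + γ = 1
    · rw [CA.e_mul_compl β γ hβ hγ h1]
      exact Submodule.zero_mem _
    · rw [CA.e_mul_e β γ hβ hγ hbg h1]
      refine Submodule.smul_mem _ _ (he0 _ (hstar β γ hβ hγ hbg h1) ?_)
      show β i + γ i = 0
      rw [hβi, hγi]; decide
  · -- Aa μ * Aa μ ⊆ A1 ⊔ A0
    intro μ
    rw [hAa μ]
    refine mulSpan CA.mul ?_
    rintro x ⟨β, ⟨hβ, hβi, hβa⟩, rfl⟩ y ⟨γ, ⟨hγ, hγi, hγa⟩, rfl⟩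
    by_cases hbg : β = γ
    · subst hbg
      rw [CA.e_mul_self β hβ]
      refine Submodule.sum_mem _ fun j hj => Submodule.smul_mem _ _ ?_
      by_cases hji : j = i
      · subst hji
        exact Submodule.mem_sup_left (Submodule.subset_span rfl)
      · exact Submodule.mem_sup_right (ht0 j hji)
    · by_cases h1 : β + γ = 1
      · rw [CA.e_mul_compl β γ hβ hγ h1]
        exact Submodule.zero_mem _
      · rw [CA.e_mul_e β γ hβ hγ hbg h1]
        refine Submodule.mem_sup_right (Submodule.smul_mem _ _
          (he0 _ (hstar β γ hβ hγ hbg h1) ?_))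
        show β i + γ i = 0
        rw [hβi, hγi]; decide
end

section
/- Suppose char(𝔽) ≠ 2 and let A = A_C(Λ) be a non-degenerate code algebra with Aut(C)-regular structure parameters such that a_{i,α} ≠ 1 for all i ∈ supp(α), α ∈ C*. For each i, let τ_i be the algebra automorphism of A defined by τ_i(t_j) = t_j for all j and τ_i(e^α) = (−1)^{α_i} e^α for all α ∈ C* (the Miyamoto involution), and let M = ⟨τ₁, …, τₙ⟩ ≤ Aut(A). Then, identifying Aut(C) with its induced subgroup of Aut(A), the group G generated by M and Aut(C) satisfies: M ∩ Aut(C) = 1, τ_i g = g τ_{ig} for all g ∈ Aut(C) and all i, M is a normal subgroup of G, and G = M ⋊ Aut(C). -/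
/-- The automorphism group of a binary linear code, as a subgroup of the symmetric group. -/
def codeAut {n : ℕ} (C : Submodule (ZMod 2) (Word n)) : Subgroup (Equiv.Perm (Fin n)) where
  carrier := {g | ∀ α : Word n, α ∈ C ↔ wperm g α ∈ C}
  one_mem' := by intro α; rfl
  mul_mem' := by
    intro g h hg hh α
    have h1 : wperm (g * h) α = wperm g (wperm h α) := by
      funext j
      show α ((g * h)⁻¹ j) = α (h⁻¹ (g⁻¹ j))
      rw [mul_inv_rev, Equiv.Perm.mul_apply]
    simp only [Set.mem_setOf_eq] at *
    rw [h1]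
    exact (hh α).trans (hg (wperm h α))
  inv_mem' := by
    intro g hg α
    simp only [Set.mem_setOf_eq] at *
    have h1 : wperm g (wperm g⁻¹ α) = α := by
      funext j
      show α ((g⁻¹).symm (g.symm j)) = α j
      rw [Equiv.Perm.inv_def, Equiv.symm_symm, Equiv.apply_symm_apply]
    have h2 := hg (wperm g⁻¹ α)
    rw [h1] at h2
    exact h2.symm

/-- Theorem 3.13: the group generated by the Miyamoto involutions and Aut(C) is the
semidirect product of the Miyamoto group M by Aut(C). -/
theorem miyamoto_semidirect {F : Type*} [Field F] {n : ℕ}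
    {C : Submodule (ZMod 2) (Word n)}
    {a : Fin n → Word n → F} {b : Word n → Word n → F} {c : Fin n → Word n → F}
    {A : Type*} [AddCommGroup A] [Module F A]
    (CA : CodeAlgebra F C a b c A)
    (hchar : (2 : F) ≠ 0)
    (hnd : Nondeg C a b c)
    (hreg : ∀ g ∈ codeAut C,
      (∀ i α, IsStar C α → α i = 1 → a i α = a (g i) (wperm g α)) ∧
      (∀ α β, IsStar C α → IsStar C β → α ≠ β → α + β ≠ 1 →
        b α β = b (wperm g α) (wperm g β)) ∧
      (∀ i α, IsStar C α → α i = 1 → c i α = c (g i) (wperm g α)))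
    (ha1 : ∀ i α, IsStar C α → α i = 1 → a i α ≠ 1)
    -- the Miyamoto involutions τ_i
    (τ : Fin n → (A ≃ₗ[F] A))
    (hτt : ∀ i j, τ i (CA.t j) = CA.t j)
    (hτe : ∀ i α, IsStar C α →
      τ i (CA.e α) = (if α i = 1 then (-1 : F) else 1) • CA.e α)
    -- the induced action of Aut(C)
    (ψ : codeAut C →* (A ≃ₗ[F] A))
    (hψt : ∀ (g : codeAut C) (i : Fin n), ψ g (CA.t i) = CA.t (g.1 i))
    (hψe : ∀ (g : codeAut C) (α : Word n), IsStar C α → ψ g (CA.e α) = CA.e (wperm g.1 α)) :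
    -- M ∩ Aut(C) = 1
    Subgroup.closure (Set.range τ) ⊓ ψ.range = ⊥ ∧
    -- τ_i g = g τ_{ig} (in the automorphism group of A)
    (∀ (g : codeAut C) (i : Fin n), ψ g * τ i = τ (g.1 i) * ψ g) ∧
    -- M is normal in G = M Aut(C), so G = M ⋊ Aut(C)
    (∀ x ∈ Subgroup.closure (Set.range τ) ⊔ ψ.range,
      ∀ m ∈ Subgroup.closure (Set.range τ), x * m * x⁻¹ ∈ Subgroup.closure (Set.range τ)) := by

  classical
  -- words transformed by code automorphisms stay "star"
  have wperm_star : ∀ (g : codeAut C) (α : Word n), IsStar C α → IsStar C (wperm g.1 α) := by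
    rintro g α ⟨hmem, h0, h1⟩
    refine ⟨(g.2 α).mp hmem, ?_, ?_⟩
    · intro h
      apply h0
      funext j
      have := congrFun h (g.1 j)
      simpa [wperm, Equiv.symm_apply_apply] using this
    · intro h
      apply h1
      funext j
      have := congrFun h (g.1 j)
      simpa [wperm, Equiv.symm_apply_apply] using this
  have wperm_apply : ∀ (g : codeAut C) (α : Word n) (i : Fin n),
      wperm g.1 α (g.1 i) = α i := by
    intro g α i
    simp [wperm, Equiv.symm_apply_apply]
  -- Part 2: the commutation relation
  have hcomm : ∀ (g : codeAut C) (i : Fin n), ψ g * τ i = τ (g.1 i) * ψ g := by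
    intro g i
    apply LinearEquiv.toLinearMap_injective
    apply CA.bas.ext
    rintro (j | ⟨α, hα⟩)
    · show (ψ g * τ i) (CA.bas (Sum.inl j)) = (τ (g.1 i) * ψ g) (CA.bas (Sum.inl j))
      rw [CA.bas_t]
      show ψ g (τ i (CA.t j)) = τ (g.1 i) (ψ g (CA.t j))
      rw [hτt, hψt, hτt]
    · show (ψ g * τ i) (CA.bas (Sum.inr ⟨α, hα⟩)) = (τ (g.1 i) * ψ g) (CA.bas (Sum.inr ⟨α, hα⟩))
      rw [CA.bas_e]
      show ψ g (τ i (CA.e α)) = τ (g.1 i) (ψ g (CA.e α))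
      rw [hτe i α hα, map_smul, hψe g α hα,
        hτe (g.1 i) (wperm g.1 α) (wperm_star g α hα), wperm_apply]
  -- elements of M fix all t_j
  have fixt : ∀ x ∈ Subgroup.closure (Set.range τ), ∀ j, x (CA.t j) = CA.t j := by
    intro x hx
    induction hx using Subgroup.closure_induction with
    | mem y hy =>
        obtain ⟨i, rfl⟩ := hy
        exact hτt i
    | one => intro j; rfl
    | mul y z hy hz ihy ihz =>
        intro j
        show y (z (CA.t j)) = CA.t j
        rw [ihz, ihy]
    | inv y hy ih =>
        intro j
        have : y⁻¹ (y (CA.t j)) = CA.t j := y.symm_apply_apply _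
        rw [ih j] at this
        exact this
  -- conjugation by ψ g preserves M
  have hconj : ∀ (g : codeAut C), ∀ m ∈ Subgroup.closure (Set.range τ),
      ψ g * m * (ψ g)⁻¹ ∈ Subgroup.closure (Set.range τ) := by
    intro g m hm
    induction hm using Subgroup.closure_induction with
    | mem y hy =>
        obtain ⟨i, rfl⟩ := hy
        have : ψ g * τ i * (ψ g)⁻¹ = τ (g.1 i) := by
          rw [hcomm g i, mul_assoc, mul_inv_cancel, mul_one]
        rw [this]
        exact Subgroup.subset_closure ⟨g.1 i, rfl⟩
    | one =>
        simpa using Subgroup.one_mem _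
    | mul y z hy hz ihy ihz =>
        have : ψ g * (y * z) * (ψ g)⁻¹ = (ψ g * y * (ψ g)⁻¹) * (ψ g * z * (ψ g)⁻¹) := by
          group
        rw [this]
        exact Subgroup.mul_mem _ ihy ihz
    | inv y hy ih =>
        have : ψ g * y⁻¹ * (ψ g)⁻¹ = (ψ g * y * (ψ g)⁻¹)⁻¹ := by group
        rw [this]
        exact Subgroup.inv_mem _ ih
  refine ⟨?_, hcomm, ?_⟩
  · -- intersection trivial
    rw [eq_bot_iff]
    rintro x hx
    obtain ⟨hxM, hxR⟩ := Subgroup.mem_inf.mp hx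
    obtain ⟨g, rfl⟩ := hxR
    have hg1 : g = 1 := by
      have hfix : ∀ i, g.1 i = i := by
        intro i
        have h1 : CA.t (g.1 i) = CA.t i := by
          rw [← hψt g i, fixt _ hxM i]
        have h2 : CA.bas (Sum.inl (g.1 i)) = CA.bas (Sum.inl i) := by
          rw [CA.bas_t, CA.bas_t, h1]
        have := CA.bas.injective h2
        exact Sum.inl.inj this
      exact Subtype.ext (Equiv.ext hfix)
    rw [hg1, map_one]
    exact Subgroup.mem_bot.mpr rfl
  · -- normality in G
    have hle : Subgroup.closure (Set.range τ) ⊔ ψ.range ≤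
        Subgroup.normalizer (Subgroup.closure (Set.range τ) : Set (A ≃ₗ[F] A)) := by
      apply sup_le
      · exact Subgroup.le_normalizer
      · rintro x ⟨g, rfl⟩
        rw [Subgroup.mem_normalizer_iff]
        intro h
        constructor
        · intro hh
          exact hconj g h hh
        · intro hh
          have := hconj g⁻¹ _ hh
          rw [map_inv] at this
          have heq : (ψ g)⁻¹ * (ψ g * h * (ψ g)⁻¹) * ((ψ g)⁻¹)⁻¹ = h := by group
          rwa [heq] at this
    intro x hx m hm
    exact (Subgroup.mem_normalizer_iff.mp (hle hx) m).mp hm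
end

section
/- Let A = A_C(Λ) be a non-degenerate code algebra. Then there exists an element t ∈ A such that t·t_i = t_i for all i ∈ {1,…,n} and t·e^α is a scalar multiple of e^α for all α ∈ C*. Moreover, this element is unique, it equals t = Σ_{i=1}^n t_i, and it is an idempotent. -/
/-- Lemma 3.15: there is a unique element t with t·t_i = t_i for all i and t·e^α a scalar
multiple of e^α for all α ∈ C*; it is the idempotent t = Σ t_i. -/
theorem sum_of_torals_unique {F : Type*} [Field F] {n : ℕ}
    {C : Submodule (ZMod 2) (Word n)}
    {a : Fin n → Word n → F} {b : Word n → Word n → F} {c : Fin n → Word n → F}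
    {A : Type*} [AddCommGroup A] [Module F A]
    (CA : CodeAlgebra F C a b c A)
    (hnd : Nondeg C a b c) :
    (∀ i : Fin n, CA.mul (∑ j, CA.t j) (CA.t i) = CA.t i) ∧
    (∀ α : Word n, IsStar C α → ∃ k : F, CA.mul (∑ j, CA.t j) (CA.e α) = k • CA.e α) ∧
    CA.mul (∑ j, CA.t j) (∑ j, CA.t j) = (∑ j, CA.t j) ∧
    (∀ u : A, (∀ i : Fin n, CA.mul u (CA.t i) = CA.t i) →
      (∀ α : Word n, IsStar C α → ∃ k : F, CA.mul u (CA.e α) = k • CA.e α) →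
      u = ∑ j, CA.t j) :=  by
  classical
  obtain ⟨hsupp, hstar, ha, hb, hc⟩ := hnd
  haveI : Fintype {α : Word n // IsStar C α} := Fintype.ofFinite _
  -- Part 1
  have h1 : ∀ i : Fin n, CA.mul (∑ j, CA.t j) (CA.t i) = CA.t i := by
    intro i
    rw [map_sum, LinearMap.sum_apply]
    simp [CA.t_mul_t]
  -- Part 2
  have h2 : ∀ α : Word n, IsStar C α →
      CA.mul (∑ j, CA.t j) (CA.e α)
        = (∑ j, if α j = 1 then a j α else 0) • CA.e α := by
    intro α hα
    rw [map_sum, LinearMap.sum_apply, Finset.sum_smul]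
    refine Finset.sum_congr rfl fun j _ => ?_
    rw [CA.t_mul_e j α hα]
    split_ifs
    · rfl
    · rw [zero_smul]
  refine ⟨h1, fun α hα => ⟨_, h2 α hα⟩, ?_, ?_⟩
  · rw [map_sum]
    exact Finset.sum_congr rfl fun i _ => h1 i
  · intro u hut hue
    set r := CA.bas.repr u with hr
    have hu : u = ∑ x, r x • CA.bas x := (CA.bas.sum_repr u).symm
    have hexp : ∀ i : Fin n,
        CA.mul u (CA.t i)
          = r (Sum.inl i) • CA.t i
            + ∑ α : {α : Word n // IsStar C α},
                (r (Sum.inr α) * (if α.1 i = 1 then a i α.1 else 0)) • CA.e α.1 := by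
      intro i
      conv_lhs => rw [hu]
      rw [map_sum, LinearMap.sum_apply, Fintype.sum_sum_type]
      congr 1
      · rw [Finset.sum_eq_single i]
        · simp [CA.bas_t, CA.t_mul_t]
        · intro j _ hj
          simp [CA.bas_t, CA.t_mul_t, hj]
        · intro h
          exact absurd (Finset.mem_univ i) h
      · refine Finset.sum_congr rfl fun α _ => ?_
        rw [CA.bas_e, map_smul, LinearMap.smul_apply,
          CA.mul_comm (CA.e α.1) (CA.t i), CA.t_mul_e i α.1 α.2]
        split_ifs <;> simp [smul_smul, mul_comm]
    have hrepr : ∀ (i : Fin n),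
        (CA.bas.repr (CA.mul u (CA.t i)) : (Fin n ⊕ {α : Word n // IsStar C α}) →₀ F)
          = Finsupp.single (Sum.inl i) 1 := by
      intro i
      rw [hut i, ← CA.bas_t i, CA.bas.repr_self]
    have key : ∀ (i : Fin n) (α0 : {α : Word n // IsStar C α}),
        r (Sum.inr α0) * (if α0.1 i = 1 then a i α0.1 else 0) = 0 := by
      intro i α0
      have h := hrepr i
      rw [hexp i] at h
      have h2 := congrArg (fun f : (Fin n ⊕ {α : Word n // IsStar C α}) →₀ F =>
        f (Sum.inr α0)) h
      simp only [map_add, map_smul, map_sum, ← CA.bas_t, ← CA.bas_e,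
        CA.bas.repr_self, Finsupp.coe_add, Finsupp.coe_smul, Pi.add_apply,
        Pi.smul_apply, Finset.sum_apply', Finsupp.single_apply, smul_eq_mul] at h2
      simpa using h2
    have key1 : ∀ i : Fin n, r (Sum.inl i) = 1 := by
      intro i
      have h := hrepr i
      rw [hexp i] at h
      have h2 := congrArg (fun f : (Fin n ⊕ {α : Word n // IsStar C α}) →₀ F =>
        f (Sum.inl i)) h
      simp only [map_add, map_smul, map_sum, ← CA.bas_t, ← CA.bas_e,
        CA.bas.repr_self, Finsupp.coe_add, Finsupp.coe_smul, Pi.add_apply,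
        Pi.smul_apply, Finset.sum_apply', Finsupp.single_apply, smul_eq_mul] at h2
      simpa using h2
    have hre : ∀ α0 : {α : Word n // IsStar C α}, r (Sum.inr α0) = 0 := by
      intro α0
      obtain ⟨hmem, hne0, -⟩ := α0.2
      have hi : ∃ i, α0.1 i = 1 := by
        by_contra hcon
        push_neg at hcon
        apply hne0
        funext i
        have h := hcon i
        simp only [Pi.zero_apply]
        revert h
        generalize α0.1 i = x
        revert x
        decide
      obtain ⟨i, hi⟩ := hi
      have h := key i α0
      rw [if_pos hi] at h
      exact (mul_eq_zero.mp h).resolve_right (ha i α0.1 α0.2 hi)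
    rw [hu, Fintype.sum_sum_type]
    simp [key1, hre, CA.bas_t]
end

section
/- Every associative bilinear form on a non-degenerate code algebra A = A_C(Λ) is symmetric; that is, if (·,·) : A × A → 𝔽 is bilinear and satisfies (x, y·z) = (x·y, z) for all x, y, z ∈ A, then (x, y) = (y, x) for all x, y ∈ A. -/
/-- Lemma 3.18: any associative bilinear form on a non-degenerate code algebra is symmetric. -/
theorem assoc_form_symmetric {F : Type*} [Field F] {n : ℕ}
    {C : Submodule (ZMod 2) (Word n)}
    {a : Fin n → Word n → F} {b : Word n → Word n → F} {c : Fin n → Word n → F}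
    {A : Type*} [AddCommGroup A] [Module F A]
    (CA : CodeAlgebra F C a b c A)
    (hnd : Nondeg C a b c)
    (B : A →ₗ[F] A →ₗ[F] F)
    (hassoc : ∀ x y z : A, B x (CA.mul y z) = B (CA.mul x y) z) :
    ∀ x y : A, B x y = B y x := by
  -- symmetry against any product
  have key : ∀ u v z : A, B z (CA.mul u v) = B (CA.mul u v) z := by
    intro u v z
    calc B z (CA.mul u v) = B (CA.mul z u) v := hassoc z u v
      _ = B (CA.mul u z) v := by rw [CA.mul_comm z u]
      _ = B u (CA.mul z v) := (hassoc u z v).symm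
      _ = B u (CA.mul v z) := by rw [CA.mul_comm z v]
      _ = B (CA.mul u v) z := hassoc u v z
  intro x y
  have h : ∀ k, B x (CA.bas k) = B (CA.bas k) x := by
    rintro (i | ⟨α, hα⟩)
    · rw [CA.bas_t]
      have ht : CA.t i = CA.mul (CA.t i) (CA.t i) := by
        rw [CA.t_mul_t, if_pos rfl]
      rw [ht]; exact key _ _ _
    · rw [CA.bas_e]
      obtain ⟨i, hi⟩ := Function.ne_iff.mp hα.2.1
      have hi1 : α i = 1 := by
        simp only [Pi.zero_apply] at hi
        rcases (by decide : ∀ x : ZMod 2, x = 0 ∨ x = 1) (α i) with h0 | h1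
        · exact absurd h0 hi
        · exact h1
      have ha : a i α ≠ 0 := hnd.2.2.1 i α hα hi1
      have hm : CA.mul (CA.t i) (CA.e α) = a i α • CA.e α := by
        rw [CA.t_mul_e i α hα, if_pos hi1]
      have hcalc : a i α * B x (CA.e α) = a i α * B (CA.e α) x := by
        calc a i α * B x (CA.e α) = B x (a i α • CA.e α) := by simp
          _ = B x (CA.mul (CA.t i) (CA.e α)) := by rw [hm]
          _ = B (CA.mul (CA.t i) (CA.e α)) x := key _ _ _
          _ = B (a i α • CA.e α) x := by rw [hm]
          _ = a i α * B (CA.e α) x := by simp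
      exact mul_left_cancel₀ ha hcalc
  have heq : B x = B.flip x := Module.Basis.ext CA.bas (fun k => h k)
  exact LinearMap.congr_fun heq y
end

section
/- Let A = A_C(Λ) be a code algebra, D a constant weight subcode of C such that the structure parameters supported on D* are constant: a_{i,α} = a, c_{i,α} = c for all i ∈ supp(α), α ∈ D*, and b_{α,β} = b for all distinct α, β ∈ D* with β ≠ α^c. Let d be the common weight of codewords in D*, m := |supp(D)|, e := 2|D*| − |D|, and fix v ∈ 𝔽₂ⁿ and λ, μ ∈ 𝔽 with μ ≠ 0. Then s(D,v) := λ·Σ_{i ∈ supp(D)} t_i + μ·Σ_{α ∈ D*} (−1)^{(v,α)} e^α is an idempotent of A if and only if λ = (1 − b·e·μ)/(2·a·d) and (b²e² + 4a²c·|D*|·d³/m)·μ² + 2be(ad − 1)·μ + 1 − 2ad = 0. -/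
open scoped Classical

/-- Proposition 4.2: the s-map. For a constant weight subcode D with constant structure
parameters, s(D,v) is an idempotent if and only if λ and μ satisfy the given equations. -/
theorem s_map_idempotent_iff {F : Type*} [Field F] {n : ℕ}
    {C : Submodule (ZMod 2) (Word n)}
    {a : Fin n → Word n → F} {b : Word n → Word n → F} {c : Fin n → Word n → F}
    {A : Type*} [AddCommGroup A] [Module F A]
    (CA : CodeAlgebra F C a b c A)
    (D : Submodule (ZMod 2) (Word n)) (hDC : D ≤ C)
    (hDne : ∃ α, IsStar D α)
    (d : ℕ) (hd : ∀ α, IsStar D α → (wsupp α).card = d)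
    (a0 b0 c0 : F)
    (ha : ∀ i α, IsStar D α → α i = 1 → a i α = a0)
    (hb : ∀ α β, IsStar D α → IsStar D β → α ≠ β → α + β ≠ 1 → b α β = b0)
    (hc : ∀ i α, IsStar D α → α i = 1 → c i α = c0)
    (v : Word n) (lam mu : F) (hmu : mu ≠ 0)
    (h2ad : (2 : F) * a0 * (d : F) ≠ 0)
    (m : ℕ) (hm : m = (Finset.univ.filter fun i : Fin n => ∃ α ∈ D, α i = 1).card)
    (hmF : (m : F) ≠ 0)
    (ds : ℕ) (hds : ds = Nat.card {α : Word n // IsStar D α})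
    (eN : F) (heN : eN = 2 * (ds : F) - (Nat.card D : F))
    (s : A)
    (hs : s = lam • (∑ i ∈ Finset.univ.filter (fun i : Fin n => ∃ α ∈ D, α i = 1), CA.t i)
      + mu • (∑ α ∈ Finset.univ.filter (fun α : Word n => IsStar D α),
          (if dotW v α = 1 then (-1 : F) else 1) • CA.e α)) :
    CA.mul s s = s ↔
      (lam = (1 - b0 * eN * mu) / (2 * a0 * (d : F)) ∧
        (b0 ^ 2 * eN ^ 2 + 4 * a0 ^ 2 * c0 * (ds : F) * (d : F) ^ 3 / (m : F)) * mu ^ 2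
          + 2 * b0 * eN * (a0 * (d : F) - 1) * mu + 1 - 2 * a0 * (d : F) = 0) := by
  classical
  set T : Finset (Fin n) := Finset.univ.filter (fun i : Fin n => ∃ α ∈ D, α i = 1) with hT
  set S : Finset (Word n) := Finset.univ.filter (fun α : Word n => IsStar D α) with hSdef
  set ε : Word n → F := fun α => if dotW v α = 1 then (-1 : F) else 1 with hεdef
  set u : A := ∑ i ∈ T, CA.t i with hu
  set w : A := ∑ α ∈ S, ε α • CA.e α with hw
  have hs' : s = lam • u + mu • w := hs
  -- basic facts
  have hz2 : ∀ x : ZMod 2, x = 0 ∨ x = 1 := by decide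
  have haddself : ∀ x : Word n, x + x = 0 := by
    intro x; funext i; simp only [Pi.add_apply, Pi.zero_apply]
    rcases hz2 (x i) with h | h <;> rw [h] <;> decide
  have haddcancel : ∀ x y z : Word n, x + y = z → x = z + y := by
    intro x y z h
    have : x + (y + y) = z + y := by rw [← add_assoc, h]
    rwa [haddself y, add_zero] at this
  have hstarD : ∀ α ∈ S, IsStar D α := fun α hα => (Finset.mem_filter.mp hα).2
  have hmemS : ∀ α, IsStar D α → α ∈ S :=
    fun α h => Finset.mem_filter.mpr ⟨Finset.mem_univ _, h⟩
  have hstarC : ∀ α, IsStar D α → IsStar C α := fun α h => ⟨hDC h.1, h.2.1, h.2.2⟩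
  obtain ⟨α₀, hα₀⟩ := hDne
  have hα₀S : α₀ ∈ S := hmemS _ hα₀
  have hdF : (d : F) ≠ 0 := by
    intro h; apply h2ad; rw [h]; ring
  have hd0 : d ≠ 0 := by intro h; exact hdF (by rw [h]; simp)
  have hsuppT : ∀ α ∈ S, wsupp α ⊆ T := by
    intro α hα i hi
    refine Finset.mem_filter.mpr ⟨Finset.mem_univ _, ⟨α, (hstarD α hα).1, ?_⟩⟩
    exact (Finset.mem_filter.mp hi).2
  have hwsuppT : ∀ α ∈ S, T.filter (fun i => α i = 1) = wsupp α := by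
    intro α hα
    ext i
    constructor
    · intro h
      exact Finset.mem_filter.mpr ⟨Finset.mem_univ _, (Finset.mem_filter.mp h).2⟩
    · intro h
      exact Finset.mem_filter.mpr ⟨hsuppT α hα h, (Finset.mem_filter.mp h).2⟩
  have hTne : T.Nonempty := by
    have : (wsupp α₀).Nonempty := by
      rw [← Finset.card_pos, hd α₀ hα₀]; exact Nat.pos_of_ne_zero hd0
    obtain ⟨i, hi⟩ := this
    exact ⟨i, hsuppT α₀ hα₀S hi⟩
  -- epsilon facts
  have hε1 : ∀ α : Word n, ε α * ε α = 1 := by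
    intro α; by_cases h : dotW v α = 1 <;> simp [hεdef, h]
  have hεne : ∀ α : Word n, ε α ≠ 0 := by
    intro α; by_cases h : dotW v α = 1 <;> simp [hεdef, h]
  have hεmul : ∀ α β : Word n, ε α * ε β = ε (α + β) := by
    have hdot : ∀ α β : Word n, dotW v (α + β) = dotW v α + dotW v β := by
      intro α β; simp [dotW, mul_add, Finset.sum_add_distrib]
    intro α β
    rcases hz2 (dotW v α) with h | h <;> rcases hz2 (dotW v β) with h' | h' <;>
      simp [hεdef, hdot, h, h']
  -- products
  have huu : CA.mul u u = u := by
    rw [hu]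
    simp only [map_sum, LinearMap.sum_apply, CA.t_mul_t]
    exact Finset.sum_congr rfl fun i hi => by rw [Finset.sum_ite_eq' T i, if_pos hi]
  have huw : CA.mul u w = ((a0 * (d : F))) • w := by
    rw [hu, hw]
    rw [Finset.smul_sum]
    simp only [map_sum, LinearMap.sum_apply]
    refine Finset.sum_congr rfl fun α hα => ?_
    have hstep : ∀ i ∈ T, CA.mul (CA.t i) (ε α • CA.e α)
        = if α i = 1 then (ε α * a0) • CA.e α else 0 := by
      intro i _
      rw [map_smul, CA.t_mul_e i α (hstarC α (hstarD α hα))]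
      by_cases h : α i = 1
      · rw [if_pos h, if_pos h, ha i α (hstarD α hα) h, smul_smul]
      · rw [if_neg h, if_neg h, smul_zero]
    rw [Finset.sum_congr rfl hstep, Finset.sum_ite, Finset.sum_const_zero, add_zero,
      Finset.sum_const, hwsuppT α hα, hd α (hstarD α hα)]
    module
  -- the constant N
  obtain ⟨N, hNconst, hNm⟩ :
      ∃ N : ℕ, (∀ i ∈ T, (S.filter (fun α => α i = 1)).card = N) ∧ m * N = ds * d := by
    set Dfin : Finset (Word n) := Finset.univ.filter (fun α : Word n => α ∈ D) with hDfin
    have hhalf : ∀ i ∈ T, 2 * (Dfin.filter (fun α => α i = 1)).card = Dfin.card := by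
      intro i hi
      obtain ⟨β, hβD, hβi⟩ := (Finset.mem_filter.mp hi).2
      have hbij : (Dfin.filter (fun α => α i = 1)).card
          = (Dfin.filter (fun α => ¬ α i = 1)).card := by
        apply Finset.card_nbij' (fun α => α + β) (fun α => α + β)
        · intro γ hγ
          obtain ⟨hγmem, hγi⟩ := Finset.mem_filter.mp hγ
          have hγD : γ ∈ D := (Finset.mem_filter.mp hγmem).2
          refine Finset.mem_filter.mpr ⟨Finset.mem_filter.mpr
            ⟨Finset.mem_univ _, D.add_mem hγD hβD⟩, ?_⟩
          show ¬ (γ + β) i = 1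
          rw [Pi.add_apply, hγi, hβi]; decide
        · intro γ hγ
          obtain ⟨hγmem, hγi⟩ := Finset.mem_filter.mp hγ
          have hγD : γ ∈ D := (Finset.mem_filter.mp hγmem).2
          refine Finset.mem_filter.mpr ⟨Finset.mem_filter.mpr
            ⟨Finset.mem_univ _, D.add_mem hγD hβD⟩, ?_⟩
          show (γ + β) i = 1
          rw [Pi.add_apply, hβi]
          rcases hz2 (γ i) with h | h
          · rw [h]; decide
          · exact absurd h hγi
        · intro γ _; dsimp only; rw [add_assoc, haddself β, add_zero]
        · intro γ _; dsimp only; rw [add_assoc, haddself β, add_zero]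
      have hsplit := Finset.card_filter_add_card_filter_not
        (s := Dfin) (p := fun α => α i = 1)
      rw [two_mul]
      nth_rewrite 2 [hbij]
      exact hsplit
    have hone_notS : (1 : Word n) ∉ S := fun h => (hstarD _ h).2.2 rfl
    have hSfil : ∀ i ∈ T, (Dfin.filter (fun α => α i = 1)).card
        = (S.filter (fun α => α i = 1)).card + (if (1 : Word n) ∈ D then 1 else 0) := by
      intro i hi
      by_cases h1 : (1 : Word n) ∈ D
      · rw [if_pos h1]
        have hins : Dfin.filter (fun α => α i = 1)
            = insert (1 : Word n) (S.filter (fun α => α i = 1)) := by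
          ext γ
          simp only [Finset.mem_filter, Finset.mem_insert, hDfin, Finset.mem_univ, true_and]
          constructor
          · rintro ⟨hγD, hγi⟩
            by_cases hγ1 : γ = 1
            · exact Or.inl hγ1
            · refine Or.inr ⟨hmemS γ ⟨hγD, ?_, hγ1⟩, hγi⟩
              intro h0; rw [h0] at hγi; simp at hγi
          · rintro (rfl | ⟨hγS, hγi⟩)
            · exact ⟨h1, rfl⟩
            · exact ⟨(hstarD γ hγS).1, hγi⟩
        rw [hins, Finset.card_insert_of_notMem
          (fun hmem => hone_notS (Finset.mem_of_mem_filter _ hmem))]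
      · rw [if_neg h1, add_zero]
        congr 1
        ext γ
        simp only [Finset.mem_filter, hDfin, Finset.mem_univ, true_and]
        constructor
        · rintro ⟨hγD, hγi⟩
          refine ⟨hmemS γ ⟨hγD, ?_, ?_⟩, hγi⟩
          · intro h0; rw [h0] at hγi; simp at hγi
          · intro h0; rw [h0] at hγD; exact h1 hγD
        · rintro ⟨hγS, hγi⟩; exact ⟨(hstarD γ hγS).1, hγi⟩
    obtain ⟨i₀, hi₀⟩ := hTne
    refine ⟨(S.filter (fun α => α i₀ = 1)).card, ?_, ?_⟩
    · intro i hi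
      have e1 : 2 * ((S.filter (fun α => α i = 1)).card + (if (1 : Word n) ∈ D then 1 else 0))
          = 2 * ((S.filter (fun α => α i₀ = 1)).card + (if (1 : Word n) ∈ D then 1 else 0)) := by
        rw [← hSfil i hi, ← hSfil i₀ hi₀, hhalf i hi, hhalf i₀ hi₀]
      exact Nat.add_right_cancel (Nat.eq_of_mul_eq_mul_left (by norm_num) e1)
    · have hcardS : S.card = ds := by
        rw [hds, Nat.card_eq_fintype_card, Fintype.card_subtype]
      have hdc : ∑ i ∈ T, (S.filter (fun α => α i = 1)).card
          = ∑ α ∈ S, (T.filter (fun i => α i = 1)).card := by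
        simp only [Finset.card_filter]
        exact Finset.sum_comm
      have hconst : ∀ i ∈ T, (S.filter (fun α => α i = 1)).card
          = (S.filter (fun α => α i₀ = 1)).card := by
        intro i hi
        have e1 : 2 * ((S.filter (fun α => α i = 1)).card + (if (1 : Word n) ∈ D then 1 else 0))
            = 2 * ((S.filter (fun α => α i₀ = 1)).card + (if (1 : Word n) ∈ D then 1 else 0)) := by
          rw [← hSfil i hi, ← hSfil i₀ hi₀, hhalf i hi, hhalf i₀ hi₀]
        exact Nat.add_right_cancel (Nat.eq_of_mul_eq_mul_left (by norm_num) e1)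
      have hleft : ∑ i ∈ T, (S.filter (fun α => α i = 1)).card
          = m * (S.filter (fun α => α i₀ = 1)).card := by
        rw [Finset.sum_congr rfl hconst, Finset.sum_const, hm, smul_eq_mul]
      have hright : ∑ α ∈ S, (T.filter (fun i => α i = 1)).card = ds * d := by
        rw [Finset.sum_congr rfl (fun α hα => by
          rw [hwsuppT α hα, hd α (hstarD α hα)])]
        rw [Finset.sum_const, smul_eq_mul, hcardS]
      rw [← hleft, hdc, hright]
  have hone_notS : (1 : Word n) ∉ S := fun h => (hstarD _ h).2.2 rfl
  have hzero_notS : (0 : Word n) ∉ S := fun h => (hstarD _ h).2.1 rfl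
  have h1word_ne0 : (1 : Word n) ≠ 0 := by
    obtain ⟨i, _⟩ := hTne
    intro h
    have h2 := congrFun h i
    simp only [Pi.one_apply, Pi.zero_apply] at h2
    exact one_ne_zero h2
  have hcardSds : S.card = ds := by
    rw [hds, Nat.card_eq_fintype_card, Fintype.card_subtype]
  have hcardD : Nat.card D = S.card + (if (1 : Word n) ∈ D then 2 else 1) := by
    have h1 : Nat.card D = (Finset.univ.filter (fun α : Word n => α ∈ D)).card := by
      rw [Nat.card_eq_fintype_card]
      exact Fintype.card_subtype _
    rw [h1]
    by_cases h1D : (1 : Word n) ∈ D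
    · rw [if_pos h1D]
      have hins : Finset.univ.filter (fun α : Word n => α ∈ D)
          = insert (0 : Word n) (insert (1 : Word n) S) := by
        ext γ
        simp only [Finset.mem_filter, Finset.mem_univ, true_and, Finset.mem_insert]
        constructor
        · intro hγD
          by_cases hγ0 : γ = 0
          · exact Or.inl hγ0
          by_cases hγ1 : γ = 1
          · exact Or.inr (Or.inl hγ1)
          exact Or.inr (Or.inr (hmemS _ ⟨hγD, hγ0, hγ1⟩))
        · rintro (rfl | rfl | h)
          · exact D.zero_mem
          · exact h1D
          · exact (hstarD _ h).1
      rw [hins, Finset.card_insert_of_notMem, Finset.card_insert_of_notMem hone_notS]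
      · rw [Finset.mem_insert]
        rintro (h0 | h0)
        · exact h1word_ne0 h0.symm
        · exact hzero_notS h0
    · rw [if_neg h1D]
      have hins : Finset.univ.filter (fun α : Word n => α ∈ D) = insert (0 : Word n) S := by
        ext γ
        simp only [Finset.mem_filter, Finset.mem_univ, true_and, Finset.mem_insert]
        constructor
        · intro hγD
          by_cases hγ0 : γ = 0
          · exact Or.inl hγ0
          refine Or.inr (hmemS _ ⟨hγD, hγ0, ?_⟩)
          intro hγ1; rw [hγ1] at hγD; exact h1D hγD
        · rintro (rfl | h)
          · exact D.zero_mem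
          · exact (hstarD _ h).1
      rw [hins, Finset.card_insert_of_notMem hzero_notS]
  have hcntF : ∀ γ ∈ S, ((S.filter (fun α => α + γ ∈ S)).card : F) = eN := by
    intro γ hγS
    have hγstar := hstarD γ hγS
    have hcompl : S.filter (fun α => ¬ α + γ ∈ S)
        = if (1 : Word n) ∈ D then ({γ, 1 + γ} : Finset (Word n)) else {γ} := by
      ext α
      constructor
      · intro h
        obtain ⟨hαS, hns⟩ := Finset.mem_filter.mp h
        have hαst := hstarD α hαS
        have hsumD : α + γ ∈ D := D.add_mem hαst.1 hγstar.1
        have hcases : α + γ = 0 ∨ α + γ = 1 := by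
          by_contra hcon
          push_neg at hcon
          exact hns (hmemS _ ⟨hsumD, hcon.1, hcon.2⟩)
        rcases hcases with h0 | h1
        · have hαγ : α = γ := by
            have := haddcancel α γ 0 h0; rwa [zero_add] at this
          subst hαγ
          split
          · exact Finset.mem_insert_self _ _
          · exact Finset.mem_singleton_self _
        · have hα1γ : α = 1 + γ := haddcancel α γ 1 h1
          have h1D : (1 : Word n) ∈ D := by rw [← h1]; exact hsumD
          rw [if_pos h1D, Finset.mem_insert, Finset.mem_singleton]
          exact Or.inr hα1γ
      · intro h
        by_cases h1D : (1 : Word n) ∈ D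
        · rw [if_pos h1D, Finset.mem_insert, Finset.mem_singleton] at h
          rcases h with rfl | rfl
          · refine Finset.mem_filter.mpr ⟨hγS, ?_⟩
            rw [haddself]
            exact hzero_notS
          · refine Finset.mem_filter.mpr ⟨?_, ?_⟩
            · refine hmemS _ ⟨D.add_mem h1D hγstar.1, ?_, ?_⟩
              · intro hc
                have := haddcancel 1 γ 0 hc
                rw [zero_add] at this
                exact hγstar.2.2 this.symm
              · intro hc
                have hγ0 : γ = 0 := by
                  have h2 := congrArg (fun x => (1 : Word n) + x) hc
                  rwa [← add_assoc, haddself, zero_add] at h2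
                exact hγstar.2.1 hγ0
            · rw [add_assoc, haddself, add_zero]
              exact hone_notS
        · rw [if_neg h1D, Finset.mem_singleton] at h
          subst h
          refine Finset.mem_filter.mpr ⟨hγS, ?_⟩
          rw [haddself]
          exact hzero_notS
    have hcomplcard : (S.filter (fun α => ¬ α + γ ∈ S)).card
        = if (1 : Word n) ∈ D then 2 else 1 := by
      rw [hcompl]
      by_cases h1D : (1 : Word n) ∈ D
      · rw [if_pos h1D, if_pos h1D]
        rw [Finset.card_insert_of_notMem, Finset.card_singleton]
        rw [Finset.mem_singleton]
        intro hc
        apply h1word_ne0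
        have h2 := congrArg (fun x => x + γ) hc
        rw [haddself, add_assoc, haddself, add_zero] at h2
        exact h2.symm
      · rw [if_neg h1D, if_neg h1D, Finset.card_singleton]
    have hsplit := Finset.card_filter_add_card_filter_not
      (s := S) (p := fun α => α + γ ∈ S)
    rw [hcomplcard] at hsplit
    rw [heN]
    have hD2 : (Nat.card D : F) = (ds : F) + ((if (1 : Word n) ∈ D then 2 else 1 : ℕ) : F) := by
      rw [hcardD, hcardSds]; push_cast; ring
    have hsplitF : ((S.filter (fun α => α + γ ∈ S)).card : F)
        + ((if (1 : Word n) ∈ D then 2 else 1 : ℕ) : F) = (ds : F) := by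
      rw [← hcardSds]
      exact_mod_cast congrArg (Nat.cast : ℕ → F) hsplit
    rw [hD2]
    linear_combination hsplitF
  have hww : CA.mul w w = (c0 * (N : F)) • u + (b0 * eN) • w := by
    have expand : CA.mul w w = ∑ p ∈ S ×ˢ S, (ε p.1 * ε p.2) • CA.mul (CA.e p.1) (CA.e p.2) := by
      rw [hw]
      simp only [map_sum, LinearMap.sum_apply, map_smul, LinearMap.smul_apply, smul_smul]
      simp only [Finset.smul_sum, smul_smul]
      rw [Finset.sum_product]
      dsimp only
      rw [Finset.sum_comm]
      exact Finset.sum_congr rfl fun α _ => Finset.sum_congr rfl fun β _ => by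
        rw [mul_comm (ε β) (ε α)]
    rw [expand]
    rw [← Finset.sum_filter_add_sum_filter_not (S ×ˢ S) (fun p => p.1 = p.2)]
    have hdiagset : (S ×ˢ S).filter (fun p => p.1 = p.2) = S.diag := by ext; simp +contextual
    have hoffset : (S ×ˢ S).filter (fun p => ¬ p.1 = p.2) = S.offDiag := by ext; simp [and_assoc]
    rw [hdiagset, hoffset, Finset.sum_diag]
    congr 1
    · -- diagonal
      have hstep : ∀ α ∈ S, (ε α * ε α) • CA.mul (CA.e α) (CA.e α)
          = ∑ i ∈ T, (if α i = 1 then c0 • CA.t i else 0) := by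
        intro α hα
        rw [hε1, one_smul, CA.e_mul_self α (hstarC α (hstarD α hα))]
        rw [Finset.sum_congr rfl (fun i hi => by
          rw [hc i α (hstarD α hα) (Finset.mem_filter.mp hi).2])]
        rw [← hwsuppT α hα, Finset.sum_filter]
      rw [Finset.sum_congr rfl hstep, Finset.sum_comm]
      rw [hu, Finset.smul_sum]
      refine Finset.sum_congr rfl fun i hi => ?_
      rw [← Finset.sum_filter, Finset.sum_const, hNconst i hi]
      rw [← Nat.cast_smul_eq_nsmul F, smul_smul, mul_comm]
    · -- off-diagonal
      rw [← Finset.sum_fiberwise_of_maps_to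
        (g := fun p : Word n × Word n => p.1 + p.2)
        (t := (Finset.univ : Finset (Word n))) (fun p _ => Finset.mem_univ _)]
      have hfib : ∀ γ ∈ (Finset.univ : Finset (Word n)),
          (∑ p ∈ S.offDiag.filter (fun p => p.1 + p.2 = γ),
            (ε p.1 * ε p.2) • CA.mul (CA.e p.1) (CA.e p.2))
          = (if γ ∈ S then (b0 * eN * ε γ) • CA.e γ else 0) := by
        intro γ _
        by_cases hγS : γ ∈ S
        · rw [if_pos hγS]
          have hγ1 : γ ≠ 1 := (hstarD γ hγS).2.2
          have hterm : ∀ p ∈ S.offDiag.filter (fun p => p.1 + p.2 = γ),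
              (ε p.1 * ε p.2) • CA.mul (CA.e p.1) (CA.e p.2) = (ε γ * b0) • CA.e γ := by
            intro p hp
            obtain ⟨hpo, hpγ⟩ := Finset.mem_filter.mp hp
            obtain ⟨h1S, h2S, hne⟩ := Finset.mem_offDiag.mp hpo
            rw [CA.e_mul_e p.1 p.2 (hstarC _ (hstarD _ h1S)) (hstarC _ (hstarD _ h2S)) hne
              (by rw [hpγ]; exact hγ1)]
            rw [hb p.1 p.2 (hstarD _ h1S) (hstarD _ h2S) hne (by rw [hpγ]; exact hγ1)]
            rw [hεmul, hpγ, smul_smul]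
          rw [Finset.sum_congr rfl hterm, Finset.sum_const]
          have hcard : (S.offDiag.filter (fun p => p.1 + p.2 = γ)).card
              = (S.filter (fun α => α + γ ∈ S)).card := by
            apply Finset.card_nbij' (fun p => p.1) (fun α => (α, α + γ))
            · intro p hp
              obtain ⟨hpo, hpγ⟩ := Finset.mem_filter.mp hp
              obtain ⟨h1S, h2S, hne⟩ := Finset.mem_offDiag.mp hpo
              refine Finset.mem_filter.mpr ⟨h1S, ?_⟩
              have h2 : p.1 + γ = p.2 := by
                rw [← hpγ, ← add_assoc, haddself, zero_add]
              rw [h2]; exact h2S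
            · intro α hα
              obtain ⟨hαS, hsum⟩ := Finset.mem_filter.mp hα
              refine Finset.mem_filter.mpr ⟨Finset.mem_offDiag.mpr ⟨hαS, hsum, ?_⟩, ?_⟩
              · intro hco
                have hγ0 : γ = 0 := by
                  have h2 := congrArg (fun x => α + x) hco.symm
                  rwa [← add_assoc, haddself, zero_add] at h2
                exact (hstarD γ hγS).2.1 hγ0
              · show α + (α + γ) = γ
                rw [← add_assoc, haddself, zero_add]
            · intro p hp
              obtain ⟨hpo, hpγ⟩ := Finset.mem_filter.mp hp
              have h2 : p.1 + γ = p.2 := by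
                rw [← hpγ, ← add_assoc, haddself, zero_add]
              exact Prod.ext rfl h2
            · intro α _
              rfl
          rw [hcard, ← Nat.cast_smul_eq_nsmul F, hcntF γ hγS, smul_smul]
          rw [show eN * (ε γ * b0) = b0 * eN * ε γ by ring]
        · rw [if_neg hγS]
          apply Finset.sum_eq_zero
          intro p hp
          obtain ⟨hpo, hpγ⟩ := Finset.mem_filter.mp hp
          obtain ⟨h1S, h2S, hne⟩ := Finset.mem_offDiag.mp hpo
          by_cases hγ1 : γ = 1
          · rw [CA.e_mul_compl p.1 p.2 (hstarC _ (hstarD _ h1S)) (hstarC _ (hstarD _ h2S))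
              (by rw [hpγ, hγ1]), smul_zero]
          · exfalso
            apply hγS
            apply hmemS
            refine ⟨?_, ?_, hγ1⟩
            · rw [← hpγ]
              exact D.add_mem (hstarD _ h1S).1 (hstarD _ h2S).1
            · intro h0
              apply hne
              have h2 : p.1 + p.2 = 0 := hpγ.trans h0
              have h3 := congrArg (fun x => p.1 + x) h2.symm
              rwa [← add_assoc, haddself, zero_add, add_zero] at h3
      rw [Finset.sum_congr rfl hfib]
      rw [Finset.sum_ite_mem, Finset.univ_inter]
      rw [hw, Finset.smul_sum]
      exact Finset.sum_congr rfl fun γ _ => by rw [smul_smul, mul_assoc]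
  -- assemble
  have hss : CA.mul s s =
      (lam * lam + mu * mu * (c0 * (N : F))) • u
        + (2 * lam * mu * (a0 * (d : F)) + mu * mu * (b0 * eN)) • w := by
    rw [hs']
    simp only [map_add, LinearMap.add_apply, map_smul, LinearMap.smul_apply]
    rw [CA.mul_comm w u]
    rw [huu, huw, hww]
    module
  -- coefficient extraction
  have hx0 : IsStar C α₀ := hstarC α₀ hα₀
  obtain ⟨i₀, hi₀⟩ := hTne
  have hrepr_t : ∀ i, CA.bas.repr (CA.t i) = Finsupp.single (Sum.inl i) 1 := by
    intro i; rw [← CA.bas_t i, CA.bas.repr_self]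
  have hrepr_e : ∀ (α : Word n) (h : IsStar C α),
      CA.bas.repr (CA.e α) = Finsupp.single (Sum.inr ⟨α, h⟩) 1 := by
    intro α h
    rw [show CA.e α = CA.bas (Sum.inr ⟨α, h⟩) from (CA.bas_e ⟨α, h⟩).symm, CA.bas.repr_self]
  have hut : (CA.bas.repr u) (Sum.inl i₀) = 1 := by
    rw [hu, map_sum, Finsupp.finset_sum_apply]
    have hterm : ∀ i ∈ T, (CA.bas.repr (CA.t i)) (Sum.inl i₀)
        = if i = i₀ then (1 : F) else 0 := by
      intro i _
      rw [hrepr_t i, Finsupp.single_apply]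
      by_cases h : i = i₀
      · rw [if_pos (by rw [h]), if_pos h]
      · rw [if_neg (by simp [h]), if_neg h]
    rw [Finset.sum_congr rfl hterm, Finset.sum_ite_eq' T i₀ (fun _ => (1 : F)), if_pos hi₀]
  have hue : (CA.bas.repr u) (Sum.inr ⟨α₀, hx0⟩) = 0 := by
    rw [hu, map_sum, Finsupp.finset_sum_apply]
    apply Finset.sum_eq_zero
    intro i _
    rw [hrepr_t i, Finsupp.single_apply, if_neg]
    simp
  have hwt : (CA.bas.repr w) (Sum.inl i₀) = 0 := by
    rw [hw, map_sum, Finsupp.finset_sum_apply]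
    apply Finset.sum_eq_zero
    intro α hα
    rw [map_smul, Finsupp.smul_apply, hrepr_e α (hstarC _ (hstarD _ hα)),
      Finsupp.single_apply, if_neg]
    · simp
    · simp
  have hwe : (CA.bas.repr w) (Sum.inr ⟨α₀, hx0⟩) = ε α₀ := by
    rw [hw, map_sum, Finsupp.finset_sum_apply]
    have hterm : ∀ α ∈ S, (CA.bas.repr (ε α • CA.e α)) (Sum.inr ⟨α₀, hx0⟩)
        = if α = α₀ then ε α else 0 := by
      intro α hα
      rw [map_smul, Finsupp.smul_apply, hrepr_e α (hstarC _ (hstarD _ hα)),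
        Finsupp.single_apply]
      by_cases h : α = α₀
      · subst h
        rw [if_pos rfl, if_pos rfl, smul_eq_mul, mul_one]
      · rw [if_neg (by simp [h]), if_neg h, smul_zero]
    rw [Finset.sum_congr rfl hterm, Finset.sum_ite_eq' S α₀ (fun α => ε α), if_pos hα₀S]
  have hcoeff : ∀ P Q : F, (P • u + Q • w = lam • u + mu • w) ↔ (P = lam ∧ Q = mu) := by
    intro P Q
    constructor
    · intro h
      have h1 := congrArg (fun x => (CA.bas.repr x) (Sum.inl i₀)) h
      have h2 := congrArg (fun x => (CA.bas.repr x) (Sum.inr (⟨α₀, hx0⟩ : {α : Word n // IsStar C α}))) h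
      simp only [map_add, map_smul, Finsupp.add_apply, Finsupp.smul_apply,
        hut, hue, hwt, hwe, smul_eq_mul, mul_one, mul_zero, add_zero, zero_add] at h1 h2
      exact ⟨h1, mul_right_cancel₀ (hεne α₀) h2⟩
    · rintro ⟨rfl, rfl⟩
      rfl
  rw [hss, hs', hcoeff]
  have hNds : (m : F) * (N : F) = (ds : F) * (d : F) := by
    exact_mod_cast congrArg (Nat.cast : ℕ → F) hNm
  constructor
  · rintro ⟨h1, h2⟩
    have h2' : 2 * lam * (a0 * (d : F)) + mu * (b0 * eN) = 1 :=
      mul_left_cancel₀ hmu (by rw [mul_one]; linear_combination h2)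
    have hlam' : lam * (2 * a0 * (d : F)) = 1 - b0 * eN * mu := by linear_combination h2'
    constructor
    · rw [eq_div_iff h2ad]; linear_combination h2'
    · have key : ((b0 ^ 2 * eN ^ 2 + 4 * a0 ^ 2 * c0 * (ds : F) * (d : F) ^ 3 / (m : F)) * mu ^ 2
          + 2 * b0 * eN * (a0 * (d : F) - 1) * mu + 1 - 2 * a0 * (d : F)) * (m : F) = 0 := by
        field_simp
        linear_combination ((2 * a0 * (d : F)) ^ 2 * (m : F)) * h1
          + ((m : F) * (2 * a0 * (d : F) - lam * (2 * a0 * (d : F)) - (1 - b0 * eN * mu))) * hlam'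
          + (-(mu ^ 2 * c0 * (2 * a0 * (d : F)) ^ 2)) * hNds
      rcases mul_eq_zero.mp key with h | h
      · exact h
      · exact absurd h hmF
  · rintro ⟨h1, h2⟩
    have hlam' : lam * (2 * a0 * (d : F)) = 1 - b0 * eN * mu := by
      rw [h1, div_mul_cancel₀ _ h2ad]
    have h2m : ((b0 ^ 2 * eN ^ 2 + 4 * a0 ^ 2 * c0 * (ds : F) * (d : F) ^ 3 / (m : F)) * mu ^ 2
          + 2 * b0 * eN * (a0 * (d : F) - 1) * mu + 1 - 2 * a0 * (d : F)) * (m : F) = 0 := by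
      rw [h2, zero_mul]
    have h2m' : (b0 ^ 2 * eN ^ 2 * (m : F) + 4 * a0 ^ 2 * c0 * (ds : F) * (d : F) ^ 3) * mu ^ 2
        + (2 * b0 * eN * (a0 * (d : F) - 1) * mu + 1 - 2 * a0 * (d : F)) * (m : F) = 0 := by
      field_simp at h2m
      linear_combination h2m
    have hX2m : ((2 * a0 * (d : F)) ^ 2 * (m : F)) ≠ 0 :=
      mul_ne_zero (pow_ne_zero 2 h2ad) hmF
    have hkey2 : ((2 * a0 * (d : F)) ^ 2 * (m : F))
        * (lam * lam + mu * mu * (c0 * (N : F)) - lam) = 0 := by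
      linear_combination h2m'
        + (-((m : F) * (2 * a0 * (d : F) - lam * (2 * a0 * (d : F)) - (1 - b0 * eN * mu)))) * hlam'
        + (mu ^ 2 * c0 * (2 * a0 * (d : F)) ^ 2) * hNds
    constructor
    · have hz := (mul_eq_zero.mp hkey2).resolve_left hX2m
      linear_combination hz
    · linear_combination mu * hlam'
end

section
/- Let A = A_C(Λ) be a code algebra, α ∈ C* with a_α := a_{i,α} and c_α := c_{i,α} independent of i ∈ supp(α), and let e = λ·t_α + μ·e^α where t_α := Σ_{i ∈ supp(α)} t_i, λ = 1/(2·a_α·|α|), and μ² = (λ − λ²)/c_α. Then: (1) for i ∉ supp(α), t_i is a 0-eigenvector of ad_e; (2) if 𝟏 ∈ C, then e^{α^c} is a 0-eigenvector of ad_e; (3) for i, j ∈ supp(α), t_i − t_j is a λ-eigenvector of ad_e; (4) 2μc_α·t_α − e^α is a (λ − 1/2)-eigenvector of ad_e. -/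
/-- Lemma 4.7: eigenvectors of the small idempotent e = λ t_α + μ e^α. -/
theorem small_idempotent_eigenvectors {F : Type*} [Field F] {n : ℕ}
    {C : Submodule (ZMod 2) (Word n)}
    {a : Fin n → Word n → F} {b : Word n → Word n → F} {c : Fin n → Word n → F}
    {A : Type*} [AddCommGroup A] [Module F A]
    (CA : CodeAlgebra F C a b c A)
    (α : Word n) (hα : IsStar C α)
    (aα cα : F)
    (haα : ∀ i, α i = 1 → a i α = aα) (hcα : ∀ i, α i = 1 → c i α = cα)
    (h2 : (2 : F) * aα * ((wsupp α).card : F) ≠ 0) (hc0 : cα ≠ 0)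
    (lam : F) (hlam : lam = ((2 : F) * aα * ((wsupp α).card : F))⁻¹)
    (mu : F) (hmu : mu ^ 2 = (lam - lam ^ 2) / cα)
    (s : A) (hs : s = lam • (∑ i ∈ wsupp α, CA.t i) + mu • CA.e α)
    (f : Module.End F A) (hf : f = CA.mul s) :
    -- (1.i) eigenvalue 0: t_i for i outside the support of α
    (∀ i, α i = 0 → f.HasEigenvector 0 (CA.t i)) ∧
    -- (1.ii) eigenvalue 0: the complementary codeword element (when 𝟏 ∈ C)
    ((1 : Word n) ∈ C → f.HasEigenvector 0 (CA.e (1 + α))) ∧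
    -- (2) eigenvalue λ: differences of toral elements in the support
    (∀ i j, α i = 1 → α j = 1 → i ≠ j → f.HasEigenvector lam (CA.t i - CA.t j)) ∧
    -- (3) eigenvalue λ - 1/2
    f.HasEigenvector (lam - 1 / 2)
      ((2 * mu * cα) • (∑ i ∈ wsupp α, CA.t i) - CA.e α) := by
  classical
  have z1 : ∀ x : ZMod 2, 1 + x = 0 → x = 1 := by decide
  have z2 : ∀ x : ZMod 2, 1 + x = 1 → x = 0 := by decide
  have z3 : ∀ x : ZMod 2, x + (1 + x) = 1 := by decide
  have z4 : ∀ x : ZMod 2, x = 1 → 1 + x = 0 := by decide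
  have hmem : ∀ i : Fin n, i ∈ wsupp α ↔ α i = 1 := by
    intro i; simp [wsupp]
  set T : A := ∑ i ∈ wsupp α, CA.t i with hT
  set E : A := CA.e α with hE
  set k : F := ((wsupp α).card : F) with hk
  -- products with T
  have hTt1 : ∀ j, α j = 1 → CA.mul T (CA.t j) = CA.t j := by
    intro j hj
    rw [hT, map_sum, LinearMap.sum_apply]
    rw [Finset.sum_eq_single j]
    · rw [CA.t_mul_t]; simp
    · intro i hi hij
      rw [CA.t_mul_t]; simp [hij]
    · intro h; exact absurd ((hmem j).mpr hj) h
  have hTt0 : ∀ j, α j = 0 → CA.mul T (CA.t j) = 0 := by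
    intro j hj
    rw [hT, map_sum, LinearMap.sum_apply]
    apply Finset.sum_eq_zero
    intro i hi
    have hij : i ≠ j := by
      intro h; rw [h, (hmem j)] at hi
      rw [hi] at hj; exact one_ne_zero hj
    rw [CA.t_mul_t]; simp [hij]
  have hTe : CA.mul T E = (k * aα) • E := by
    rw [hT, map_sum, LinearMap.sum_apply]
    have hcg : ∀ i ∈ wsupp α, CA.mul (CA.t i) E = aα • E := by
      intro i hi
      have hi1 := (hmem i).mp hi
      rw [hE, CA.t_mul_e i α hα, if_pos hi1, haα i hi1]
    rw [Finset.sum_congr rfl hcg, Finset.sum_const, hk]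
    rw [← Nat.cast_smul_eq_nsmul F, smul_smul]
  have hEE : CA.mul E E = cα • T := by
    rw [hE, CA.e_mul_self α hα, hT, Finset.smul_sum]
    apply Finset.sum_congr rfl
    intro i hi
    rw [hcα i ((hmem i).mp hi)]
  have hEt1 : ∀ j, α j = 1 → CA.mul E (CA.t j) = aα • E := by
    intro j hj
    rw [CA.mul_comm, hE, CA.t_mul_e j α hα, if_pos hj, haα j hj]
  have hEt0 : ∀ j, α j = 0 → CA.mul E (CA.t j) = 0 := by
    intro j hj
    rw [CA.mul_comm, hE, CA.t_mul_e j α hα]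
    have : ¬ (α j = 1) := by rw [hj]; exact fun h => one_ne_zero h.symm
    rw [if_neg this]
  have hfx : ∀ x : A, f x = lam • CA.mul T x + mu • CA.mul E x := by
    intro x
    rw [hf, hs, map_add, map_smul, map_smul]
    rfl
  have hkaα : lam * (2 * aα * k) = 1 := by
    rw [hlam, hk]; exact inv_mul_cancel₀ h2
  have hmuc : mu ^ 2 * cα = lam - lam ^ 2 := by
    rw [hmu]; field_simp
  have h2ne : (2 : F) ≠ 0 := by
    intro h; exact h2 (by rw [h]; ring)
  have htne : ∀ i : Fin n, CA.t i ≠ 0 := by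
    intro i; rw [← CA.bas_t i]; exact CA.bas.ne_zero _
  refine ⟨?_, ?_, ?_, ?_⟩
  · -- (1.i)
    intro i hi
    refine ⟨?_, htne i⟩
    rw [Module.End.mem_eigenspace_iff, hfx, hTt0 i hi, hEt0 i hi]
    simp
  · -- (1.ii)
    intro h1
    have hstar : IsStar C (1 + α) := by
      refine ⟨C.add_mem h1 hα.1, ?_, ?_⟩
      · intro h
        apply hα.2.2
        funext i
        have := congrFun h i
        exact z1 (α i) this
      · intro h
        apply hα.2.1
        funext i
        have := congrFun h i
        exact z2 (α i) this
    refine ⟨?_, ?_⟩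
    · rw [Module.End.mem_eigenspace_iff, hfx]
      have hcompl : CA.mul E (CA.e (1 + α)) = 0 := by
        rw [hE]
        apply CA.e_mul_compl α (1 + α) hα hstar
        funext i
        exact z3 (α i)
      have hTcompl : CA.mul T (CA.e (1 + α)) = 0 := by
        rw [hT, map_sum, LinearMap.sum_apply]
        apply Finset.sum_eq_zero
        intro i hi
        rw [CA.t_mul_e i (1 + α) hstar]
        have hi1 := (hmem i).mp hi
        have h0 : (1 + α) i = 0 := z4 (α i) hi1
        rw [h0]
        simp
      rw [hcompl, hTcompl]
      simp
    · rw [← CA.bas_e ⟨1 + α, hstar⟩]; exact CA.bas.ne_zero _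
  · -- (2)
    intro i j hi hj hij
    refine ⟨?_, ?_⟩
    · rw [Module.End.mem_eigenspace_iff, map_sub, hfx, hfx,
        hTt1 i hi, hTt1 j hj, hEt1 i hi, hEt1 j hj]
      module
    · intro h
      apply hij
      have hs0 := sub_eq_zero.mp h
      rw [← CA.bas_t i, ← CA.bas_t j] at hs0
      exact Sum.inl.inj (CA.bas.injective hs0)
  · -- (3)
    have hTT : CA.mul T T = T := by
      nth_rewrite 2 [hT]
      rw [map_sum]
      rw [Finset.sum_congr rfl (fun j hj => hTt1 j ((hmem j).mp hj)), ← hT]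
    have hET : CA.mul E T = (k * aα) • E := by
      rw [hT, map_sum]
      rw [Finset.sum_congr rfl (fun j hj => hEt1 j ((hmem j).mp hj)),
        Finset.sum_const, ← Nat.cast_smul_eq_nsmul F, smul_smul, ← hk]
    have hfT : f T = lam • T + (mu * (k * aα)) • E := by
      rw [hfx T, hTT, hET, smul_smul]
    have hfE : f E = (lam * (k * aα)) • E + (mu * cα) • T := by
      rw [hfx E, hTe, hEE, smul_smul, smul_smul]
    have hc1 : 2 * mu * cα * lam - mu * cα = (lam - 1/2) * (2 * mu * cα) := by
      field_simp
    have hc2 : 2 * mu * cα * (mu * (k * aα)) - lam * (k * aα) = -(lam - 1/2) := by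
      field_simp
      linear_combination (4 * k * aα) * hmuc + (1 - 2 * lam) * hkaα
    refine ⟨?_, ?_⟩
    · rw [Module.End.mem_eigenspace_iff, map_sub, map_smul, hfT, hfE]
      calc (2 * mu * cα) • (lam • T + (mu * (k * aα)) • E)
              - ((lam * (k * aα)) • E + (mu * cα) • T)
          = (2 * mu * cα * lam - mu * cα) • T
              + (2 * mu * cα * (mu * (k * aα)) - lam * (k * aα)) • E := by module
        _ = ((lam - 1/2) * (2 * mu * cα)) • T + (-(lam - 1/2)) • E := by rw [hc1, hc2]
        _ = (lam - 1/2) • ((2 * mu * cα) • T - E) := by module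
    · intro h
      have hEb : E = CA.bas (Sum.inr ⟨α, hα⟩) := by
        rw [hE]; exact (CA.bas_e ⟨α, hα⟩).symm
      have hTb : T = ∑ i ∈ wsupp α, CA.bas (Sum.inl i) := by
        rw [hT]; exact Finset.sum_congr rfl (fun i _ => (CA.bas_t i).symm)
      rw [hEb, hTb] at h
      have h0 := congrArg (fun v => (CA.bas.repr v) (Sum.inr ⟨α, hα⟩)) h
      simp [Finsupp.single_apply] at h0
end
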